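/- arXiv:0709.2393 — 4 statements merged into one kernel-verified Lean document; each statement's English description precedes it below -/
import Mathlib

section
/- Let d ≥ 1 and let m* be a real number with m* > d/2. There exists a constant C > 0, depending only on d and m*, with the following property: for all real numbers γ, γ' with 0 ≤ γ' < γ ≤ 1, every M ≥ 0, every matrix A : ℤ^d × ℤ^d → ℂ satisfying |A(a,b)| ≤ M e^{−γ|a−b|} for all a, b ∈ ℤ^d, and every ζ : ℤ^d → ℂ with ‖ζ‖_{γ'}² := Σ_{b∈ℤ^d} |ζ(b)|² e^{2γ'|b|} ⟨b⟩^{2m*} < ∞, the sums (Aζ)(a) = Σ_{b∈ℤ^d} A(a,b) ζ(b) converge absolutely for every a, and ‖Aζ‖_{γ'} ≤ C (γ − γ')^{−(d+m*)} M ‖ζ‖_{γ'}. -/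
open ENNReal

/-- The lattice point `a ∈ ℤ^d` viewed as a vector in Euclidean space `ℝ^d`. -/
noncomputable def latt {d : ℕ} (a : Fin d → ℤ) : EuclideanSpace ℝ (Fin d) :=
  WithLp.toLp 2 (fun i => (a i : ℝ))

/-- The summand of the square of the weighted `ℓ²`-norm
`‖ζ‖_γ² = Σ_b |ζ(b)|² e^{2γ'|b|} ⟨b⟩^{2m*}`, where `⟨b⟩ = max(|b|,1)`. -/
noncomputable def wSummand {d : ℕ} (mstar γ : ℝ) (ζ : (Fin d → ℤ) → ℂ)
    (b : Fin d → ℤ) : ℝ :=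
  ‖ζ b‖ ^ 2 * Real.exp (2 * γ * ‖latt b‖) * max ‖latt b‖ 1 ^ (2 * mstar)

section aux

lemma ofReal_norm_eq_coe_nnnorm {E : Type*} [SeminormedAddGroup E] (a : E) :
    ENNReal.ofReal ‖a‖ = (‖a‖₊ : ℝ≥0∞) :=
  ENNReal.ofReal_eq_coe_nnreal (norm_nonneg a)

lemma latt_sub' {d : ℕ} (a b : Fin d → ℤ) : latt (a - b) = latt a - latt b := by
  ext i
  simp [latt]

lemma abs_coord_le_norm_latt {d : ℕ} (c : Fin d → ℤ) (i : Fin d) :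
    |(c i : ℝ)| ≤ ‖latt c‖ := by
  rw [EuclideanSpace.norm_eq (latt c), show |(c i : ℝ)| = Real.sqrt ((c i : ℝ)^2) by
    rw [Real.sqrt_sq_eq_abs]]
  apply Real.sqrt_le_sqrt
  have : ((c i : ℝ))^2 = ‖(latt c) i‖^2 := by simp [latt, sq_abs]
  rw [this]
  exact Finset.single_le_sum (f := fun j => ‖latt c j‖^2) (fun j _ => sq_nonneg _)
    (Finset.mem_univ i)

lemma sum_abs_le_d_norm {d : ℕ} (c : Fin d → ℤ) :
    (∑ i, |(c i : ℝ)|) ≤ d * ‖latt c‖ := by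
  calc (∑ i, |(c i : ℝ)|) ≤ ∑ _i : Fin d, ‖latt c‖ :=
        Finset.sum_le_sum (fun i _ => abs_coord_le_norm_latt c i)
    _ = d * ‖latt c‖ := by simp [Finset.sum_const, nsmul_eq_mul]

lemma rpow_le_exp_aux {m : ℝ} (hm : 0 < m) {x : ℝ} (hx : 0 ≤ x) :
    x ^ m ≤ m ^ m * Real.exp x := by
  rcases eq_or_lt_of_le hx with h | h
  · rw [← h, Real.zero_rpow hm.ne']
    positivity
  · have hlog : Real.log (x / m) ≤ x / m - 1 := Real.log_le_sub_one_of_pos (by positivity)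
    have h1 : m * Real.log x ≤ m * Real.log m + x := by
      rw [Real.log_div h.ne' hm.ne'] at hlog
      have h2 := mul_le_mul_of_nonneg_left hlog hm.le
      rw [mul_sub, mul_sub, mul_div_cancel₀ _ hm.ne'] at h2
      linarith
    calc x ^ m = Real.exp (m * Real.log x) := by
          rw [Real.rpow_def_of_pos h]; ring_nf
      _ ≤ Real.exp (m * Real.log m + x) := Real.exp_le_exp.2 h1
      _ = m ^ m * Real.exp x := by
          rw [Real.exp_add, Real.rpow_def_of_pos hm]; ring_nf

lemma max_one_submul {p q r : ℝ} (hp : p ≤ q + r) :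
    max p 1 ≤ 2 * (max q 1 * max r 1) := by
  have h1 : (1:ℝ) ≤ max q 1 := le_max_right _ _
  have h2 : (1:ℝ) ≤ max r 1 := le_max_right _ _
  have h3 : q ≤ max q 1 := le_max_left _ _
  have h4 : r ≤ max r 1 := le_max_left _ _
  rcases max_cases p 1 with ⟨he, _⟩ | ⟨he, _⟩ <;> rw [he] <;> nlinarith

lemma one_add_rpow_le {m : ℝ} (hm : 0 < m) {ε t : ℝ} (hε : 0 < ε) (hε1 : ε ≤ 1)
    (ht : 0 ≤ t) :
    (1 + t) ^ m ≤ 4 ^ m * (1 + m ^ m) * ε ^ (-m) * Real.exp (ε * t / 2) := by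
  have h2e : (1:ℝ) ≤ 2 / ε := by rw [le_div_iff₀ hε]; linarith
  have hde : (0:ℝ) < 2 / ε := by positivity
  have hexp1 : (1:ℝ) ≤ Real.exp (ε * t / 2) := Real.one_le_exp (by positivity)
  have htm : t ^ m ≤ m ^ m * (2/ε) ^ m * Real.exp (ε * t / 2) := by
    have key := rpow_le_exp_aux hm (x := ε * t / 2) (by positivity)
    have : t ^ m = (2/ε) ^ m * (ε * t / 2) ^ m := by
      rw [← Real.mul_rpow hde.le (by positivity)]
      congr 1
      field_simp
    rw [this]
    calc (2/ε) ^ m * (ε * t / 2) ^ m ≤ (2/ε) ^ m * (m ^ m * Real.exp (ε * t / 2)) := by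
          apply mul_le_mul_of_nonneg_left key (by positivity)
      _ = m ^ m * (2/ε) ^ m * Real.exp (ε * t / 2) := by ring
  have hmax : (1 + t) ^ m ≤ (2 * max t 1) ^ m := by
    apply Real.rpow_le_rpow (by linarith) _ hm.le
    rcases max_cases t 1 with ⟨he, hc⟩ | ⟨he, hc⟩ <;> rw [he] <;> linarith
  have hsplit : (2 * max t 1) ^ m = 2 ^ m * (max t 1) ^ m := by
    rw [Real.mul_rpow (by norm_num) (by positivity)]
  have hmaxm : (max t 1) ^ m ≤ 1 + t ^ m := by
    rcases max_cases t 1 with ⟨he, hc⟩ | ⟨he, hc⟩ <;> rw [he]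
    · have : (0:ℝ) ≤ t ^ m := Real.rpow_nonneg ht m
      linarith
    · rw [Real.one_rpow]
      have : (0:ℝ) ≤ t ^ m := Real.rpow_nonneg ht m
      linarith
  have h2em : (1:ℝ) ≤ (2/ε) ^ m := Real.one_le_rpow h2e hm.le
  have hfin : 2 ^ m * (1 + t ^ m) ≤ 2 ^ m * ((1 + m ^ m) * (2/ε) ^ m * Real.exp (ε*t/2)) := by
    apply mul_le_mul_of_nonneg_left _ (by positivity)
    have hmm : (0:ℝ) ≤ m ^ m := Real.rpow_nonneg hm.le m
    nlinarith [htm, h2em, hexp1, mul_le_mul_of_nonneg_left h2em hmm]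
  have heq : (2:ℝ) ^ m * ((1 + m ^ m) * (2/ε) ^ m * Real.exp (ε*t/2))
      = 4 ^ m * (1 + m ^ m) * ε ^ (-m) * Real.exp (ε * t / 2) := by
    rw [Real.rpow_neg hε.le, Real.div_rpow (by norm_num) hε.le]
    have h4 : (4:ℝ) ^ m = 2 ^ m * 2 ^ m := by
      rw [← Real.mul_rpow (by norm_num) (by norm_num)]; norm_num
    rw [h4]
    field_simp
  calc (1+t)^m ≤ 2 ^ m * (max t 1) ^ m := by rw [← hsplit]; exact hmax
    _ ≤ 2 ^ m * (1 + t ^ m) := mul_le_mul_of_nonneg_left hmaxm (by positivity)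
    _ ≤ _ := by rw [← heq]; exact hfin

lemma int_exp_sum_le {a : ℝ} (ha : 0 < a) (ha1 : a ≤ 1) :
    ∑' n : ℤ, ENNReal.ofReal (Real.exp (-a * |(n:ℝ)|)) ≤ ENNReal.ofReal (4/a) := by
  set f : ℤ → ℝ≥0∞ := fun n => ENNReal.ofReal (Real.exp (-a * |(n:ℝ)|)) with hf
  have hsplit : ∑' n : ℤ, f n = (∑' n : ℕ, f n) + ∑' n : ℕ, f (-(n+1)) :=
    tsum_of_nat_of_neg_add_one ENNReal.summable ENNReal.summable
  set r : ℝ≥0∞ := ENNReal.ofReal (Real.exp (-a)) with hr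
  have hrpow : ∀ t : ℝ, 0 ≤ t → ENNReal.ofReal (Real.exp (-a * t)) ≤ r ^ ⌊t⌋₊ := by
    intro t ht
    rw [hr, ← ENNReal.ofReal_pow (Real.exp_nonneg _), ← Real.exp_nat_mul]
    apply ENNReal.ofReal_le_ofReal
    apply Real.exp_le_exp.2
    have : (⌊t⌋₊ : ℝ) ≤ t := Nat.floor_le ht
    nlinarith
  have hinv : (1 - r)⁻¹ ≤ ENNReal.ofReal (2/a) := by
    have hexple : Real.exp (-a) ≤ 1 - a/2 := by
      have h1 : a + 1 ≤ Real.exp a := Real.add_one_le_exp a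
      rw [Real.exp_neg a]
      have hea : 0 < Real.exp a := Real.exp_pos a
      rw [inv_le_iff_one_le_mul₀ hea]
      nlinarith
    have hsub : ENNReal.ofReal (a/2) ≤ 1 - r := by
      have : (1:ℝ≥0∞) - r = ENNReal.ofReal (1 - Real.exp (-a)) := by
        rw [ENNReal.ofReal_sub _ (Real.exp_nonneg _), ENNReal.ofReal_one]
      rw [this]
      exact ENNReal.ofReal_le_ofReal (by linarith)
    calc (1-r)⁻¹ ≤ (ENNReal.ofReal (a/2))⁻¹ := ENNReal.inv_le_inv' hsub
      _ = ENNReal.ofReal ((a/2)⁻¹) := (ENNReal.ofReal_inv_of_pos (by positivity)).symm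
      _ = ENNReal.ofReal (2/a) := by norm_num
  have hgeo : ∀ g : ℕ → ℝ≥0∞, (∀ n, g n ≤ r ^ n) → ∑' n : ℕ, g n ≤ ENNReal.ofReal (2/a) := by
    intro g hg
    calc ∑' n : ℕ, g n ≤ ∑' n : ℕ, r ^ n := ENNReal.tsum_le_tsum hg
      _ = (1 - r)⁻¹ := ENNReal.tsum_geometric r
      _ ≤ _ := hinv
  have h1 : ∑' n : ℕ, f n ≤ ENNReal.ofReal (2/a) := by
    apply hgeo
    intro n
    have := hrpow n (Nat.cast_nonneg n)
    simpa [hf, Nat.abs_cast] using this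
  have h2 : ∑' n : ℕ, f (-(n+1)) ≤ ENNReal.ofReal (2/a) := by
    apply hgeo
    intro n
    have hge := hrpow (n+1) (by positivity)
    have hfl : ⌊(n:ℝ)+1⌋₊ = n + 1 := by
      rw [← Nat.cast_one, ← Nat.cast_add, Nat.floor_natCast]
    rw [hfl] at hge
    have hfn : f (-(n+1)) = ENNReal.ofReal (Real.exp (-a * ((n:ℝ)+1))) := by
      simp only [hf]
      congr 2
      rw [abs_of_nonpos (by push_cast; linarith)]
      push_cast
      ring
    rw [hfn]
    refine hge.trans ?_
    calc r ^ (n+1) = r ^ n * r := pow_succ r n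
      _ ≤ r ^ n * 1 := by
          apply mul_le_mul_right
          rw [hr]
          exact ENNReal.ofReal_le_one.2 (Real.exp_le_one_iff.2 (by linarith))
      _ = r ^ n := mul_one _
  calc ∑' n : ℤ, f n = _ := hsplit
    _ ≤ ENNReal.ofReal (2/a) + ENNReal.ofReal (2/a) := add_le_add h1 h2
    _ = ENNReal.ofReal (4/a) := by
        rw [← ENNReal.ofReal_add (by positivity) (by positivity)]
        ring_nf

lemma tsum_pi_prod (g : ℤ → ℝ≥0∞) :
    ∀ d : ℕ, ∑' c : Fin d → ℤ, ∏ i, g (c i) = (∑' n : ℤ, g n) ^ d := by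
  intro d
  induction d with
  | zero =>
      rw [pow_zero]
      have : ∀ c : Fin 0 → ℤ, ∏ i, g (c i) = 1 := by
        intro c; simp
      rw [tsum_congr this]
      rw [tsum_eq_single (default : Fin 0 → ℤ) (fun b hb => absurd (Subsingleton.elim b default) hb)]
  | succ n ih =>
      rw [← (Fin.consEquiv (fun _ => ℤ)).tsum_eq (fun c => ∏ i, g (c i))]
      have hterm : ∀ p : ℤ × (Fin n → ℤ),
          (∏ i, g (((Fin.consEquiv (fun _ => ℤ)) p) i)) = g p.1 * ∏ i, g (p.2 i) := by
        intro p
        rw [Fin.prod_univ_succ]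
        simp [Fin.consEquiv]
      rw [tsum_congr hterm]
      rw [ENNReal.tsum_prod (f := fun (a : ℤ) (b : Fin n → ℤ) => g a * ∏ i, g (b i))]
      calc ∑' (a : ℤ) (b : Fin n → ℤ), g a * ∏ i, g (b i)
          = ∑' (a : ℤ), g a * ∑' b : Fin n → ℤ, ∏ i, g (b i) := by
            congr 1; funext a; exact ENNReal.tsum_mul_left
        _ = (∑' n : ℤ, g n) * (∑' n : ℤ, g n) ^ n := by
            rw [ih, ENNReal.tsum_mul_right]
        _ = (∑' n : ℤ, g n) ^ (n+1) := by ring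

lemma latt_sum_bound (d : ℕ) (hd : 1 ≤ d) (m : ℝ) (hm : 0 < m) {ε : ℝ}
    (hε : 0 < ε) (hε1 : ε ≤ 1) :
    ∑' c : Fin d → ℤ, ENNReal.ofReal (Real.exp (-ε * ‖latt c‖) * (2 * max ‖latt c‖ 1) ^ m)
      ≤ ENNReal.ofReal ((8 ^ m * (1 + m ^ m) * (8*d) ^ d) * ε ^ (-((d:ℝ) + m))) := by
  have hd0 : (0:ℝ) < d := by exact_mod_cast hd
  set a : ℝ := ε / (2*d) with ha
  have ha0 : 0 < a := by positivity
  have ha1 : a ≤ 1 := by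
    have hd1 : (1:ℝ) ≤ d := by exact_mod_cast hd
    rw [ha, div_le_one (by positivity)]
    nlinarith
  set K : ℝ := 8 ^ m * (1 + m ^ m) * ε ^ (-m) with hK
  have hK0 : 0 ≤ K := by positivity
  have hpt : ∀ c : Fin d → ℤ,
      ENNReal.ofReal (Real.exp (-ε * ‖latt c‖) * (2 * max ‖latt c‖ 1) ^ m)
        ≤ ENNReal.ofReal K * ∏ i, ENNReal.ofReal (Real.exp (-a * |(c i : ℝ)|)) := by
    intro c
    set t : ℝ := ‖latt c‖ with htdef
    have ht : 0 ≤ t := norm_nonneg _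
    have step1 : Real.exp (-ε*t) * (2 * max t 1) ^ m ≤ K * Real.exp (-(ε/2) * t) := by
      have h1 : (2 * max t 1) ^ m ≤ (2 * (1+t)) ^ m := by
        apply Real.rpow_le_rpow (by positivity) _ hm.le
        rcases max_cases t 1 with ⟨he, hc⟩ | ⟨he, hc⟩ <;> rw [he] <;> linarith
      have h2 : (2 * (1+t)) ^ m = 2 ^ m * (1+t) ^ m :=
        Real.mul_rpow (by norm_num) (by linarith)
      have h3 := one_add_rpow_le hm hε hε1 ht
      have h8 : (8:ℝ) ^ m = 2 ^ m * 4 ^ m := by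
        rw [← Real.mul_rpow (by norm_num) (by norm_num)]; norm_num
      have h4 : (2 * max t 1) ^ m ≤ 2 ^ m * (4 ^ m * (1 + m ^ m) * ε ^ (-m) * Real.exp (ε * t / 2)) := by
        rw [h2] at h1
        refine h1.trans (mul_le_mul_of_nonneg_left h3 (by positivity))
      calc Real.exp (-ε*t) * (2 * max t 1) ^ m
          ≤ Real.exp (-ε*t) * (2 ^ m * (4 ^ m * (1 + m ^ m) * ε ^ (-m) * Real.exp (ε * t / 2))) :=
            mul_le_mul_of_nonneg_left h4 (Real.exp_nonneg _)
        _ = (2 ^ m * 4 ^ m) * (1 + m ^ m) * ε ^ (-m) * (Real.exp (-ε*t) * Real.exp (ε*t/2)) := by ring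
        _ = K * Real.exp (-(ε/2) * t) := by
            rw [hK, h8, ← Real.exp_add]
            ring_nf
    have step2 : Real.exp (-(ε/2) * t) ≤ ∏ i, Real.exp (-a * |(c i : ℝ)|) := by
      rw [← Real.exp_sum]
      apply Real.exp_le_exp.2
      have hsum := sum_abs_le_d_norm c
      have heq : ∑ i, -a * |(c i : ℝ)| = -a * ∑ i, |(c i : ℝ)| := by
        rw [Finset.mul_sum]
      rw [heq, ha]
      rw [htdef] at *
      have h5 : ε / (2*d) * (∑ i, |(c i : ℝ)|) ≤ ε / (2*d) * (d * ‖latt c‖) :=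
        mul_le_mul_of_nonneg_left hsum (by positivity)
      have h6 : ε / (2*(d:ℝ)) * (d * ‖latt c‖) = ε/2 * ‖latt c‖ := by
        field_simp
      nlinarith
    calc ENNReal.ofReal (Real.exp (-ε*t) * (2 * max t 1) ^ m)
        ≤ ENNReal.ofReal (K * ∏ i, Real.exp (-a * |(c i : ℝ)|)) := by
          apply ENNReal.ofReal_le_ofReal
          refine step1.trans (mul_le_mul_of_nonneg_left step2 hK0)
      _ = ENNReal.ofReal K * ∏ i, ENNReal.ofReal (Real.exp (-a * |(c i : ℝ)|)) := by
          rw [ENNReal.ofReal_mul hK0]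
          congr 1
          rw [← ENNReal.ofReal_prod_of_nonneg (fun i _ => Real.exp_nonneg _)]
  calc ∑' c : Fin d → ℤ, ENNReal.ofReal (Real.exp (-ε * ‖latt c‖) * (2 * max ‖latt c‖ 1) ^ m)
      ≤ ∑' c : Fin d → ℤ, ENNReal.ofReal K * ∏ i, ENNReal.ofReal (Real.exp (-a * |(c i : ℝ)|)) :=
        ENNReal.tsum_le_tsum hpt
    _ = ENNReal.ofReal K * ∑' c : Fin d → ℤ, ∏ i, ENNReal.ofReal (Real.exp (-a * |(c i : ℝ)|)) :=
        ENNReal.tsum_mul_left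
    _ = ENNReal.ofReal K * (∑' n : ℤ, ENNReal.ofReal (Real.exp (-a * |(n:ℝ)|))) ^ d := by
        rw [tsum_pi_prod (fun n : ℤ => ENNReal.ofReal (Real.exp (-a * |(n:ℝ)|))) d]
    _ ≤ ENNReal.ofReal K * (ENNReal.ofReal (4/a)) ^ d := by
        apply mul_le_mul_right
        exact pow_le_pow_left' (int_exp_sum_le ha0 ha1) d
    _ = ENNReal.ofReal (K * (4/a) ^ d) := by
        rw [← ENNReal.ofReal_pow (by positivity), ← ENNReal.ofReal_mul hK0]
    _ ≤ ENNReal.ofReal ((8 ^ m * (1 + m ^ m) * (8*d) ^ d) * ε ^ (-((d:ℝ) + m))) := by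
        apply ENNReal.ofReal_le_ofReal
        apply le_of_eq
        rw [hK, ha]
        have h4a : (4 / (ε / (2*(d:ℝ)))) = 8*d/ε := by
          field_simp
          ring
        rw [h4a, div_pow]
        have hεd : (ε:ℝ) ^ (-((d:ℝ) + m)) = (ε^d)⁻¹ * ε ^ (-m) := by
          rw [neg_add, Real.rpow_add hε, Real.rpow_neg hε.le ((d:ℝ)), Real.rpow_natCast]
        rw [hεd]
        field_simp

lemma young_l2 {G : Type*} [AddCommGroup G] (h x : G → ℝ≥0∞) :
    ∑' a, (∑' b, h (a - b) * x b) ^ 2 ≤ 2 * (∑' c, h c) ^ 2 * ∑' b, (x b) ^ 2 := by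
  set S : ℝ≥0∞ := ∑' c, h c with hS
  have hrow : ∀ a : G, ∑' b, h (a - b) = S := by
    intro a
    rw [hS, ← (Equiv.subLeft a).tsum_eq h]
    rfl
  have hcol : ∀ b : G, ∑' a, h (a - b) = S := by
    intro b
    rw [hS, ← (Equiv.subRight b).tsum_eq h]
    rfl
  have hxx : ∀ p q : ℝ≥0∞, p * q ≤ p^2 + q^2 := by
    intro p q
    calc p * q ≤ max p q * max p q :=
          mul_le_mul' (le_max_left _ _) (le_max_right _ _)
      _ = max (p^2) (q^2) := by
          rcases le_total p q with hpq | hpq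
          · rw [max_eq_right hpq, max_eq_right (by exact pow_le_pow_left' hpq 2)]; ring
          · rw [max_eq_left hpq, max_eq_left (by exact pow_le_pow_left' hpq 2)]; ring
      _ ≤ p^2 + q^2 := max_le (le_add_right le_rfl) (le_add_left le_rfl)
  have hsq : ∀ a : G, (∑' b, h (a - b) * x b) ^ 2
      = ∑' b, ∑' c, (h (a-b) * x b) * (h (a-c) * x c) := by
    intro a
    rw [sq]
    rw [← ENNReal.tsum_mul_right]
    congr 1; funext b
    rw [← ENNReal.tsum_mul_left]
  have hbd : ∀ a : G, (∑' b, h (a - b) * x b) ^ 2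
      ≤ ∑' b, ∑' c, h (a-b) * h (a-c) * (x b)^2 + ∑' b, ∑' c, h (a-b) * h (a-c) * (x c)^2 := by
    intro a
    rw [hsq a, ← ENNReal.tsum_add]
    apply ENNReal.tsum_le_tsum
    intro b
    rw [← ENNReal.tsum_add]
    apply ENNReal.tsum_le_tsum
    intro c
    calc (h (a-b) * x b) * (h (a-c) * x c) = h (a-b) * h (a-c) * (x b * x c) := by ring
      _ ≤ h (a-b) * h (a-c) * ((x b)^2 + (x c)^2) :=
          mul_le_mul_right (hxx _ _) _
      _ = h (a-b) * h (a-c) * (x b)^2 + h (a-b) * h (a-c) * (x c)^2 := by ring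
  have hP1 : ∑' (a : G) (b : G) (c : G), h (a-b) * h (a-c) * (x b)^2 = S^2 * ∑' b, (x b)^2 := by
    have inner : ∀ a b : G, ∑' c, h (a-b) * h (a-c) * (x b)^2 = h (a-b) * (x b)^2 * S := by
      intro a b
      calc ∑' c, h (a-b) * h (a-c) * (x b)^2 = ∑' c, (h (a-b) * (x b)^2) * h (a-c) := by
            congr 1; funext c; ring
        _ = (h (a-b) * (x b)^2) * ∑' c, h (a-c) := ENNReal.tsum_mul_left
        _ = h (a-b) * (x b)^2 * S := by rw [hrow a]
    calc ∑' (a : G) (b : G) (c : G), h (a-b) * h (a-c) * (x b)^2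
        = ∑' (a : G) (b : G), h (a-b) * (x b)^2 * S := by
          congr 1; funext a; congr 1; funext b; exact inner a b
      _ = ∑' (b : G) (a : G), h (a-b) * (x b)^2 * S := ENNReal.tsum_comm
      _ = ∑' (b : G), ((x b)^2 * S) * ∑' (a : G), h (a-b) := by
          congr 1; funext b
          rw [← ENNReal.tsum_mul_left]
          congr 1; funext a; ring
      _ = ∑' (b : G), ((x b)^2 * S) * S := by
          congr 1; funext b; rw [hcol b]
      _ = (∑' (b : G), (x b)^2) * S * S := by
          rw [← ENNReal.tsum_mul_right, ← ENNReal.tsum_mul_right]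
      _ = S^2 * ∑' b, (x b)^2 := by ring
  have hP2 : ∑' (a : G) (b : G) (c : G), h (a-b) * h (a-c) * (x c)^2 = S^2 * ∑' b, (x b)^2 := by
    have swap : ∀ a : G, ∑' (b : G) (c : G), h (a-b) * h (a-c) * (x c)^2
        = ∑' (b : G) (c : G), h (a-b) * h (a-c) * (x b)^2 := by
      intro a
      rw [ENNReal.tsum_comm]
      congr 1; funext b; congr 1; funext c; ring
    calc ∑' (a : G) (b : G) (c : G), h (a-b) * h (a-c) * (x c)^2
        = ∑' (a : G) (b : G) (c : G), h (a-b) * h (a-c) * (x b)^2 := by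
          congr 1; funext a; exact swap a
      _ = S^2 * ∑' b, (x b)^2 := hP1
  calc ∑' a, (∑' b, h (a - b) * x b) ^ 2
      ≤ ∑' a, (∑' (b : G) (c : G), h (a-b) * h (a-c) * (x b)^2
          + ∑' (b : G) (c : G), h (a-b) * h (a-c) * (x c)^2) := ENNReal.tsum_le_tsum hbd
    _ = ∑' (a : G) (b : G) (c : G), h (a-b) * h (a-c) * (x b)^2
          + ∑' (a : G) (b : G) (c : G), h (a-b) * h (a-c) * (x c)^2 := ENNReal.tsum_add
    _ = S^2 * ∑' b, (x b)^2 + S^2 * ∑' b, (x b)^2 := by rw [hP1, hP2]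
    _ = 2 * S^2 * ∑' b, (x b)^2 := by ring

lemma wSummand_nonneg {d : ℕ} (m γ : ℝ) (ζ : (Fin d → ℤ) → ℂ) (b : Fin d → ℤ) :
    0 ≤ wSummand m γ ζ b := by
  unfold wSummand
  positivity

end aux

/-- Young-inequality bound (2.2): if `|A(a,b)| ≤ M e^{−γ|a−b|}` and
`‖ζ‖_{γ'} < ∞` for some `0 ≤ γ' < γ ≤ 1`, then `Aζ` is absolutely convergent and
`‖Aζ‖_{γ'} ≤ C (γ−γ')^{−(d+m*)} M ‖ζ‖_{γ'}` with `C` depending only on `d, m*`. -/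
theorem stmt_15 (d : ℕ) (hd : 1 ≤ d) (mstar : ℝ) (hm : (d : ℝ) / 2 < mstar) :
    ∃ C : ℝ, 0 < C ∧ ∀ γ γ' : ℝ, 0 ≤ γ' → γ' < γ → γ ≤ 1 →
      ∀ M : ℝ, 0 ≤ M →
      ∀ A : (Fin d → ℤ) → (Fin d → ℤ) → ℂ,
        (∀ a b, ‖A a b‖ ≤ M * Real.exp (-γ * ‖latt (a - b)‖)) →
      ∀ ζ : (Fin d → ℤ) → ℂ, Summable (wSummand mstar γ' ζ) →
        (∀ a, Summable fun b => ‖A a b * ζ b‖) ∧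
        Summable (wSummand mstar γ' (fun a => ∑' b, A a b * ζ b)) ∧
        Real.sqrt (∑' a, wSummand mstar γ' (fun a' => ∑' b, A a' b * ζ b) a) ≤
          C * (γ - γ') ^ (-((d : ℝ) + mstar)) * M *
            Real.sqrt (∑' b, wSummand mstar γ' ζ b) := by
  have hd0 : (0:ℝ) < d := by exact_mod_cast hd
  have hm0 : 0 < mstar := lt_of_le_of_lt (by positivity) hm
  set C₁ : ℝ := 8 ^ mstar * (1 + mstar ^ mstar) * (8*d) ^ d with hC₁
  have hC₁0 : 0 < C₁ := by positivity
  refine ⟨Real.sqrt 2 * C₁, by positivity, ?_⟩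
  intro γ γ' hγ'0 hγ'γ hγ1 M hM A hA ζ hζ
  set ε : ℝ := γ - γ' with hεdef
  have hε : 0 < ε := by simp [hεdef]; linarith
  have hε1 : ε ≤ 1 := by simp [hεdef]; linarith
  -- real weight
  set wr : (Fin d → ℤ) → ℝ := fun b => Real.exp (γ' * ‖latt b‖) * (max ‖latt b‖ 1) ^ mstar
    with hwr
  have hwr0 : ∀ b, 0 < wr b := by
    intro b
    rw [hwr]
    have : (0:ℝ) < max ‖latt b‖ 1 := lt_of_lt_of_le one_pos (le_max_right _ _)
    positivity
  have hwr1 : ∀ b, 1 ≤ wr b := by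
    intro b
    have h1 : 1 ≤ Real.exp (γ' * ‖latt b‖) := Real.one_le_exp (by positivity)
    have h2 : 1 ≤ (max ‖latt b‖ 1) ^ mstar := Real.one_le_rpow (le_max_right _ _) hm0.le
    show (1:ℝ) ≤ Real.exp (γ' * ‖latt b‖) * (max ‖latt b‖ 1) ^ mstar
    nlinarith
  set W : (Fin d → ℤ) → ℝ≥0∞ := fun b => ENNReal.ofReal (wr b) with hWdef
  have hW1 : ∀ b, 1 ≤ W b := fun b => ENNReal.one_le_ofReal.2 (hwr1 b)
  -- wSummand as a square
  have hws : ∀ (ξ : (Fin d → ℤ) → ℂ) (b), wSummand mstar γ' ξ b = (‖ξ b‖ * wr b)^2 := by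
    intro ξ b
    unfold wSummand
    rw [hwr]
    have e1 : Real.exp (2 * γ' * ‖latt b‖) = (Real.exp (γ' * ‖latt b‖))^2 := by
      rw [sq, ← Real.exp_add]; ring_nf
    have e2 : (max ‖latt b‖ 1) ^ (2*mstar) = ((max ‖latt b‖ 1) ^ mstar)^2 := by
      rw [← Real.rpow_natCast ((max ‖latt b‖ 1) ^ mstar) 2,
        ← Real.rpow_mul (le_trans zero_le_one (le_max_right _ _))]
      norm_num
      rw [mul_comm]
    rw [e1, e2]; ring
  have hofws : ∀ (ξ : (Fin d → ℤ) → ℂ) (b), ENNReal.ofReal (wSummand mstar γ' ξ b)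
      = ((‖ξ b‖₊ : ℝ≥0∞) * W b)^2 := by
    intro ξ b
    rw [hws ξ b, ENNReal.ofReal_pow (by positivity), ENNReal.ofReal_mul (norm_nonneg _),
      ofReal_norm_eq_coe_nnnorm]
  set x : (Fin d → ℤ) → ℝ≥0∞ := fun b => (‖ζ b‖₊ : ℝ≥0∞) * W b with hx
  set Xr : ℝ := ∑' b, wSummand mstar γ' ζ b with hXrdef
  have hXr0 : 0 ≤ Xr := tsum_nonneg (fun b => wSummand_nonneg _ _ _ _)
  have hX : ∑' b, (x b)^2 = ENNReal.ofReal Xr := by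
    rw [hXrdef, ENNReal.ofReal_tsum_of_nonneg (fun b => wSummand_nonneg _ _ _ _) hζ]
    exact tsum_congr (fun b => (hofws ζ b).symm)
  have hXtop : ∑' b, (x b)^2 ≠ ⊤ := by rw [hX]; exact ENNReal.ofReal_ne_top
  set h : (Fin d → ℤ) → ℝ≥0∞ :=
    fun c => ENNReal.ofReal (Real.exp (-ε * ‖latt c‖) * (2 * max ‖latt c‖ 1) ^ mstar) with hh
  set S : ℝ≥0∞ := ∑' c, h c with hSdef
  set S₁ : ℝ := C₁ * ε ^ (-((d:ℝ) + mstar)) with hS₁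
  have hS₁0 : 0 ≤ S₁ := by positivity
  have hS : S ≤ ENNReal.ofReal S₁ := latt_sum_bound d hd mstar hm0 hε hε1
  have hStop : S ≠ ⊤ := (lt_of_le_of_lt hS ENNReal.ofReal_lt_top).ne
  have hrow : ∀ a, ∑' b, h (a - b) = S := by
    intro a
    rw [hSdef, ← (Equiv.subLeft a).tsum_eq h]
    rfl
  -- kernel bound
  have hker : ∀ a b, (‖A a b‖₊ : ℝ≥0∞) * W a ≤ ENNReal.ofReal M * (h (a-b) * W b) := by
    intro a b
    set t : ℝ := ‖latt (a-b)‖ with htdef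
    have ht0 : 0 ≤ t := norm_nonneg _
    have htri : ‖latt a‖ ≤ ‖latt b‖ + t := by
      calc ‖latt a‖ = ‖latt b + (latt a - latt b)‖ := by rw [add_sub_cancel]
        _ ≤ ‖latt b‖ + ‖latt a - latt b‖ := norm_add_le _ _
        _ = ‖latt b‖ + t := by rw [htdef, latt_sub']
    have hmaxle : max ‖latt a‖ 1 ≤ 2 * (max ‖latt b‖ 1 * max t 1) := max_one_submul htri
    have hmb : (0:ℝ) < max ‖latt b‖ 1 := lt_of_lt_of_le one_pos (le_max_right _ _)
    have hmt : (0:ℝ) < max t 1 := lt_of_lt_of_le one_pos (le_max_right _ _)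
    have hma : (0:ℝ) < max ‖latt a‖ 1 := lt_of_lt_of_le one_pos (le_max_right _ _)
    have hrp : (max ‖latt a‖ 1) ^ mstar ≤ (2 * max t 1) ^ mstar * (max ‖latt b‖ 1) ^ mstar := by
      calc (max ‖latt a‖ 1)^mstar ≤ (2 * (max ‖latt b‖ 1 * max t 1))^mstar :=
            Real.rpow_le_rpow (by positivity) hmaxle hm0.le
        _ = (2 * max t 1)^mstar * (max ‖latt b‖ 1)^mstar := by
            rw [← Real.mul_rpow (by positivity) (by positivity)]
            congr 1; ring
    have hexp : Real.exp (γ' * ‖latt a‖) ≤ Real.exp (γ' * ‖latt b‖ + γ' * t) := by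
      apply Real.exp_le_exp.2
      nlinarith [mul_le_mul_of_nonneg_left htri hγ'0]
    have key : ‖A a b‖ * wr a ≤ M * ((Real.exp (-ε * t) * (2 * max t 1)^mstar) * wr b) := by
      have hAab := hA a b
      rw [← htdef] at hAab
      have hwra : wr a ≤ Real.exp (γ' * ‖latt b‖ + γ' * t)
          * ((2 * max t 1)^mstar * (max ‖latt b‖ 1)^mstar) :=
        mul_le_mul hexp hrp (by positivity) (Real.exp_nonneg _)
      have hmul := mul_le_mul hAab hwra (le_of_lt (hwr0 a)) (by positivity)
      refine hmul.trans (le_of_eq ?_)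
      have hwrb : wr b = Real.exp (γ' * ‖latt b‖) * (max ‖latt b‖ 1) ^ mstar := rfl
      rw [hwrb]
      have hexpeq : Real.exp (-γ*t) * Real.exp (γ' * ‖latt b‖ + γ' * t)
          = Real.exp (-ε*t) * Real.exp (γ' * ‖latt b‖) := by
        rw [← Real.exp_add, ← Real.exp_add]
        congr 1
        rw [hεdef]; ring
      calc (M * Real.exp (-γ * t)) * (Real.exp (γ' * ‖latt b‖ + γ' * t)
              * ((2 * max t 1)^mstar * (max ‖latt b‖ 1)^mstar))
          = M * ((Real.exp (-γ*t) * Real.exp (γ' * ‖latt b‖ + γ' * t))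
              * ((2 * max t 1)^mstar * (max ‖latt b‖ 1)^mstar)) := by ring
        _ = M * ((Real.exp (-ε*t) * Real.exp (γ' * ‖latt b‖))
              * ((2 * max t 1)^mstar * (max ‖latt b‖ 1)^mstar)) := by rw [hexpeq]
        _ = M * ((Real.exp (-ε * t) * (2 * max t 1)^mstar)
              * (Real.exp (γ' * ‖latt b‖) * (max ‖latt b‖ 1) ^ mstar)) := by ring
    calc (‖A a b‖₊ : ℝ≥0∞) * W a = ENNReal.ofReal (‖A a b‖ * wr a) := by
          rw [ENNReal.ofReal_mul (norm_nonneg _), ofReal_norm_eq_coe_nnnorm]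
      _ ≤ ENNReal.ofReal (M * ((Real.exp (-ε * t) * (2 * max t 1)^mstar) * wr b)) :=
          ENNReal.ofReal_le_ofReal key
      _ = ENNReal.ofReal M * (h (a-b) * W b) := by
          rw [ENNReal.ofReal_mul hM, ENNReal.ofReal_mul (by positivity)]
  set y : (Fin d → ℤ) → ℝ≥0∞ := fun a => ∑' b, (‖A a b‖₊ : ℝ≥0∞) * (‖ζ b‖₊ : ℝ≥0∞) with hy
  have hyW : ∀ a, y a * W a ≤ ENNReal.ofReal M * ∑' b, h (a-b) * x b := by
    intro a
    calc y a * W a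
        = ∑' b, ((‖A a b‖₊ : ℝ≥0∞) * W a) * (‖ζ b‖₊ : ℝ≥0∞) := by
          rw [hy, ← ENNReal.tsum_mul_right]; congr 1; funext b; ring
      _ ≤ ∑' b, (ENNReal.ofReal M * (h (a-b) * W b)) * (‖ζ b‖₊ : ℝ≥0∞) :=
          ENNReal.tsum_le_tsum (fun b => mul_le_mul_left (hker a b) _)
      _ = ENNReal.ofReal M * ∑' b, h (a-b) * x b := by
          rw [← ENNReal.tsum_mul_left]; congr 1; funext b; rw [hx]; ring
  have hxmax : ∀ b, x b ≤ max 1 (∑' b', (x b')^2) := by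
    intro b
    rcases le_total (x b) 1 with hb | hb
    · exact hb.trans (le_max_left _ _)
    · refine le_trans ?_ (le_max_right _ _)
      calc x b ≤ (x b)^2 := le_self_pow₀ hb two_ne_zero
        _ ≤ ∑' b', (x b')^2 := ENNReal.le_tsum b
  have hconv : ∀ a, ∑' b, h (a-b) * x b ≤ S * max 1 (∑' b', (x b')^2) := by
    intro a
    calc ∑' b, h (a-b) * x b ≤ ∑' b, h (a-b) * max 1 (∑' b', (x b')^2) :=
          ENNReal.tsum_le_tsum (fun b => mul_le_mul_right (hxmax b) _)
      _ = (∑' b, h (a-b)) * max 1 (∑' b', (x b')^2) := ENNReal.tsum_mul_right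
      _ = S * max 1 (∑' b', (x b')^2) := by rw [hrow a]
  have hfin : ENNReal.ofReal M * (S * max 1 (∑' b', (x b')^2)) ≠ ⊤ := by
    apply ENNReal.mul_ne_top ENNReal.ofReal_ne_top
    apply ENNReal.mul_ne_top hStop
    exact (max_lt ENNReal.one_lt_top hXtop.lt_top).ne
  -- (i)
  have hi : ∀ a, Summable fun b => ‖A a b * ζ b‖ := by
    intro a
    have hcoe : ∀ b, (‖A a b * ζ b‖₊ : ℝ≥0∞) = (‖A a b‖₊ : ℝ≥0∞) * (‖ζ b‖₊ : ℝ≥0∞) := by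
      intro b; rw [nnnorm_mul, ENNReal.coe_mul]
    have hne : ∑' b, (‖A a b * ζ b‖₊ : ℝ≥0∞) ≠ ⊤ := by
      rw [tsum_congr hcoe]
      have h1 : y a ≤ y a * W a := by
        conv_lhs => rw [← mul_one (y a)]
        exact mul_le_mul_right (hW1 a) _
      exact ne_top_of_le_ne_top hfin (h1.trans ((hyW a).trans (mul_le_mul_right (hconv a) _)))
    have hsnn := ENNReal.tsum_coe_ne_top_iff_summable.1 hne
    have := NNReal.summable_coe.2 hsnn
    simpa [coe_nnnorm] using this
  have hya : ∀ a, (‖(∑' b, A a b * ζ b)‖₊ : ℝ≥0∞) ≤ y a := by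
    intro a
    have h1 : ‖∑' b, A a b * ζ b‖ ≤ ∑' b, ‖A a b * ζ b‖ := norm_tsum_le_tsum_norm (hi a)
    calc (‖∑' b, A a b * ζ b‖₊ : ℝ≥0∞) = ENNReal.ofReal ‖∑' b, A a b * ζ b‖ :=
          (ofReal_norm_eq_coe_nnnorm _).symm
      _ ≤ ENNReal.ofReal (∑' b, ‖A a b * ζ b‖) := ENNReal.ofReal_le_ofReal h1
      _ = ∑' b, ENNReal.ofReal ‖A a b * ζ b‖ :=
          ENNReal.ofReal_tsum_of_nonneg (fun b => norm_nonneg _) (hi a)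
      _ = y a := by
          rw [hy]
          congr 1; funext b
          rw [ofReal_norm_eq_coe_nnnorm, nnnorm_mul, ENNReal.coe_mul]
  -- main estimate
  set Te : ℝ≥0∞ := ∑' a, ENNReal.ofReal (wSummand mstar γ' (fun a' => ∑' b, A a' b * ζ b) a)
    with hTe
  have hTbd : Te ≤ ENNReal.ofReal (M^2 * (2 * S₁^2 * Xr)) := by
    have hstep : ∀ a, ENNReal.ofReal (wSummand mstar γ' (fun a' => ∑' b, A a' b * ζ b) a)
        ≤ (ENNReal.ofReal M)^2 * (∑' b, h (a-b) * x b)^2 := by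
      intro a
      rw [hofws]
      calc ((‖∑' b, A a b * ζ b‖₊ : ℝ≥0∞) * W a)^2 ≤ (y a * W a)^2 :=
            pow_le_pow_left' (mul_le_mul_left (hya a) _) 2
        _ ≤ (ENNReal.ofReal M * ∑' b, h (a-b) * x b)^2 := pow_le_pow_left' (hyW a) 2
        _ = (ENNReal.ofReal M)^2 * (∑' b, h (a-b) * x b)^2 := mul_pow _ _ 2
    calc Te ≤ ∑' a, (ENNReal.ofReal M)^2 * (∑' b, h (a-b) * x b)^2 :=
          ENNReal.tsum_le_tsum hstep
      _ = (ENNReal.ofReal M)^2 * ∑' a, (∑' b, h (a-b) * x b)^2 := ENNReal.tsum_mul_left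
      _ ≤ (ENNReal.ofReal M)^2 * (2 * S^2 * ∑' b, (x b)^2) :=
          mul_le_mul_right (young_l2 h x) _
      _ ≤ (ENNReal.ofReal M)^2 * (2 * (ENNReal.ofReal S₁)^2 * ENNReal.ofReal Xr) := by
          rw [hX]
          exact mul_le_mul_right
            (mul_le_mul_left (mul_le_mul_right (pow_le_pow_left' hS 2) 2) _) _
      _ = ENNReal.ofReal (M^2 * (2 * S₁^2 * Xr)) := by
          rw [← ENNReal.ofReal_pow hM, ← ENNReal.ofReal_pow hS₁0,
            ← ENNReal.ofReal_ofNat 2, ← ENNReal.ofReal_mul (by norm_num),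
            ← ENNReal.ofReal_mul (by positivity), ← ENNReal.ofReal_mul (by positivity)]
  -- (ii)
  have hii : Summable (wSummand mstar γ' (fun a => ∑' b, A a b * ζ b)) := by
    have hne : Te ≠ ⊤ := ne_top_of_le_ne_top ENNReal.ofReal_ne_top hTbd
    have hsum := ENNReal.summable_toReal hne
    refine hsum.congr (fun a => ?_)
    exact ENNReal.toReal_ofReal (wSummand_nonneg _ _ _ _)
  refine ⟨hi, hii, ?_⟩
  -- (iii)
  have hTrofReal : ENNReal.ofReal (∑' a, wSummand mstar γ' (fun a' => ∑' b, A a' b * ζ b) a)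
      = Te := by
    rw [hTe, ENNReal.ofReal_tsum_of_nonneg (fun a => wSummand_nonneg _ _ _ _) hii]
  have hTrle : (∑' a, wSummand mstar γ' (fun a' => ∑' b, A a' b * ζ b) a)
      ≤ M^2 * (2 * S₁^2 * Xr) := by
    rw [← ENNReal.ofReal_le_ofReal_iff (by positivity)]
    rw [hTrofReal]
    exact hTbd
  calc Real.sqrt (∑' a, wSummand mstar γ' (fun a' => ∑' b, A a' b * ζ b) a)
      ≤ Real.sqrt (M^2 * (2 * S₁^2 * Xr)) := Real.sqrt_le_sqrt hTrle
    _ = Real.sqrt 2 * C₁ * ε ^ (-((d:ℝ) + mstar)) * M * Real.sqrt Xr := by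
        rw [Real.sqrt_mul (sq_nonneg M), Real.sqrt_sq hM,
          Real.sqrt_mul (by positivity : (0:ℝ) ≤ 2 * S₁^2),
          Real.sqrt_mul (by norm_num : (0:ℝ) ≤ 2), Real.sqrt_sq hS₁0, hS₁]
        ring
end

section
/- Let d ≥ 1. There exists a constant C > 0, depending only on d, with the following property: for all real numbers γ, γ' with 0 ≤ γ' < γ ≤ 1, all M, N ≥ 0, and all matrices A, B : ℤ^d × ℤ^d → ℂ satisfying |A(a,b)| ≤ M e^{−γ|a−b|} and |B(a,b)| ≤ N e^{−γ'|a−b|} for all a, b ∈ ℤ^d, one has for all a, b ∈ ℤ^d: Σ_{k∈ℤ^d} |A(a,k)| |B(k,b)| < ∞, |Σ_{k∈ℤ^d} A(a,k) B(k,b)| ≤ C (γ − γ')^{−d} M N e^{−γ'|a−b|}, and likewise |Σ_{k∈ℤ^d} B(a,k) A(k,b)| ≤ C (γ − γ')^{−d} M N e^{−γ'|a−b|}. -/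
set_option maxHeartbeats 1000000


lemma latt_triangle {d : ℕ} (a b k : Fin d → ℤ) :
    ‖latt (a - b)‖ ≤ ‖latt (a - k)‖ + ‖latt (k - b)‖ := by
  have h : latt (a - b) = latt (a - k) + latt (k - b) := by
    ext i
    show ((a i - b i : ℤ) : ℝ) = ((a i - k i : ℤ) : ℝ) + ((k i - b i : ℤ) : ℝ)
    push_cast
    ring
  rw [h]; exact norm_add_le _ _

lemma abs_coord_le {d : ℕ} (m : Fin d → ℤ) (i : Fin d) : |(m i : ℝ)| ≤ ‖latt m‖ := by
  rw [EuclideanSpace.norm_eq, ← Real.sqrt_sq_eq_abs]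
  apply Real.sqrt_le_sqrt
  have : |(m i : ℝ)| ^ 2 ≤ ∑ j, ‖latt m j‖ ^ 2 := by
    have := Finset.single_le_sum (f := fun j => ‖latt m j‖ ^ 2)
      (fun j _ => sq_nonneg _) (Finset.mem_univ i)
    simpa [latt, sq_abs] using this
  simpa [sq_abs] using this

lemma hasSum_pi_prod {g : ℤ → ℝ} (hg0 : ∀ n, 0 ≤ g n) {s : ℝ} (hg : HasSum g s) (d : ℕ) :
    HasSum (fun m : Fin d → ℤ => ∏ i, g (m i)) (s ^ d) := by
  induction d with
  | zero =>
      have h : ∀ (b' : Fin 0 → ℤ), b' ≠ (fun _ => 0) → (∏ i, g (b' i)) = 0 :=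
        fun b' h => absurd (Subsingleton.elim b' _) h
      simpa using hasSum_single (f := fun b : Fin 0 → ℤ => ∏ i, g (b i)) (fun _ => 0) h
  | succ d ih =>
      have hP0 : (0 : (Fin d → ℤ) → ℝ) ≤ fun m => ∏ i, g (m i) :=
        fun m => Finset.prod_nonneg fun i _ => hg0 _
      have hg0' : (0 : ℤ → ℝ) ≤ g := fun n => hg0 n
      have hmul : Summable (fun p : ℤ × (Fin d → ℤ) => g p.1 * ∏ i, g (p.2 i)) :=
        Summable.mul_of_nonneg (f := g) (g := fun m : Fin d → ℤ => ∏ i, g (m i))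
          hg.summable ih.summable hg0' hP0
      have h2 : HasSum (fun p : ℤ × (Fin d → ℤ) => g p.1 * ∏ i, g (p.2 i)) (s * s ^ d) :=
        HasSum.mul (f := g) (g := fun m : Fin d → ℤ => ∏ i, g (m i)) hg ih hmul
      refine (Equiv.hasSum_iff (Fin.consEquiv (fun _ : Fin (d + 1) => ℤ))).mp ?_
      have hfe : ((fun m : Fin (d+1) → ℤ => ∏ i, g (m i)) ∘ (Fin.consEquiv (fun _ : Fin (d + 1) => ℤ)))
          = fun p : ℤ × (Fin d → ℤ) => g p.1 * ∏ i, g (p.2 i) := by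
        funext p
        simp [Fin.consEquiv, Fin.prod_univ_succ]
      rw [hfe, pow_succ]
      rw [mul_comm s (s ^ d)] at h2
      exact h2

lemma hasSum_exp_abs_int {x : ℝ} (hx : 0 < x) :
    HasSum (fun n : ℤ => Real.exp (-x * |(n : ℝ)|))
      ((1 - Real.exp (-x))⁻¹ + (1 - Real.exp (-x))⁻¹ - 1) := by
  set r := Real.exp (-x) with hr
  have hr0 : 0 ≤ r := Real.exp_nonneg _
  have hr1 : r < 1 := by
    rw [hr, ← Real.exp_zero]
    exact Real.exp_lt_exp.mpr (by linarith)
  have hf : ∀ n : ℤ, Real.exp (-x * |(n : ℝ)|) = r ^ n.natAbs := by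
    intro n
    rw [hr, ← Real.exp_nat_mul]
    congr 1
    rw [Nat.cast_natAbs, Int.cast_abs]
    ring
  have hgeo : HasSum (fun n : ℕ => r ^ n) (1 - r)⁻¹ := hasSum_geometric_of_lt_one hr0 hr1
  have h1 : HasSum (fun n : ℕ => Real.exp (-x * |(((n : ℤ) : ℝ))|)) (1 - r)⁻¹ := by
    have : (fun n : ℕ => Real.exp (-x * |(((n : ℤ) : ℝ))|)) = fun n : ℕ => r ^ n := by
      funext n; rw [hf]; simp
    rw [this]; exact hgeo
  have h2 : HasSum (fun n : ℕ => Real.exp (-x * |(((-n : ℤ) : ℝ))|)) (1 - r)⁻¹ := by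
    have : (fun n : ℕ => Real.exp (-x * |(((-n : ℤ) : ℝ))|)) = fun n : ℕ => r ^ n := by
      funext n; rw [hf]; simp
    rw [this]; exact hgeo
  have key := HasSum.of_nat_of_neg (f := fun n : ℤ => Real.exp (-x * |(n : ℝ)|)) h1 h2
  have h0 : Real.exp (-x * |(((0 : ℤ) : ℝ))|) = 1 := by norm_num
  rw [h0] at key
  exact key

lemma key_sum {d : ℕ} (hd : 1 ≤ d) {ε : ℝ} (hε0 : 0 < ε) (hε1 : ε ≤ 1) :
    Summable (fun m : Fin d → ℤ => Real.exp (-ε * ‖latt m‖)) ∧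
    ∑' m : Fin d → ℤ, Real.exp (-ε * ‖latt m‖) ≤ (4 * d / ε) ^ d := by
  have hd0 : (0 : ℝ) < d := by exact_mod_cast hd
  set x : ℝ := ε / d with hxdef
  have hx0 : 0 < x := div_pos hε0 hd0
  have hx1 : x ≤ 1 := by
    have h1d : (1:ℝ) ≤ d := by exact_mod_cast hd
    rw [hxdef, div_le_one hd0]; linarith
  have hgs := hasSum_exp_abs_int hx0
  set c : ℝ := (1 - Real.exp (-x))⁻¹ with hcdef
  have hpi := hasSum_pi_prod (g := fun n : ℤ => Real.exp (-x * |(n : ℝ)|))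
    (fun n => (Real.exp_pos _).le) hgs d
  -- pointwise bound
  have hle : ∀ m : Fin d → ℤ,
      Real.exp (-ε * ‖latt m‖) ≤ ∏ i, Real.exp (-x * |(m i : ℝ)|) := by
    intro m
    rw [← Real.exp_sum]
    apply Real.exp_le_exp.mpr
    have hco : ∑ i, |(m i : ℝ)| ≤ d * ‖latt m‖ := by
      calc ∑ i, |(m i : ℝ)| ≤ ∑ _i : Fin d, ‖latt m‖ :=
            Finset.sum_le_sum fun i _ => abs_coord_le m i
        _ = d * ‖latt m‖ := by
            simp [Finset.sum_const, Finset.card_univ, nsmul_eq_mul]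
    have hsum : ∑ i, -x * |(m i : ℝ)| = -x * ∑ i, |(m i : ℝ)| := by
      rw [Finset.mul_sum]
    rw [hsum]
    have hkey : x * (∑ i, |(m i : ℝ)|) ≤ x * (d * ‖latt m‖) :=
      mul_le_mul_of_nonneg_left hco hx0.le
    have hxd : x * (d * ‖latt m‖) = ε * ‖latt m‖ := by
      rw [hxdef]; field_simp
    linarith
  -- half-bound on the 1-d sum
  have hhalf : x / 2 ≤ 1 - Real.exp (-x) := by
    have hE : x + 1 ≤ Real.exp x := Real.add_one_le_exp x
    have hEpos : 0 < Real.exp x := Real.exp_pos x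
    have hneg : Real.exp (-x) = (Real.exp x)⁻¹ := Real.exp_neg x
    rw [hneg]
    have hinv : Real.exp x * (Real.exp x)⁻¹ = 1 := mul_inv_cancel₀ (ne_of_gt hEpos)
    nlinarith [mul_le_mul_of_nonneg_right hE (show (0:ℝ) ≤ 2 - x by linarith),
      mul_pos hEpos (show (0:ℝ) < (Real.exp x)⁻¹ by positivity)]
  have hposc : 0 < 1 - Real.exp (-x) := lt_of_lt_of_le (by positivity) hhalf
  have hc2 : c ≤ 2 / x := by
    rw [hcdef]
    have : (2 / x)⁻¹ ≤ 1 - Real.exp (-x) := by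
      rw [show (2 / x)⁻¹ = x / 2 by field_simp]
      exact hhalf
    calc (1 - Real.exp (-x))⁻¹ ≤ ((2 / x)⁻¹)⁻¹ :=
          inv_anti₀ (by positivity) this
      _ = 2 / x := inv_inv _
  have hc1 : 1 ≤ c := by
    rw [hcdef]
    have h1 : 1 - Real.exp (-x) ≤ 1 := by
      have := Real.exp_nonneg (-x); linarith
    calc (1:ℝ) = 1⁻¹ := by norm_num
      _ ≤ (1 - Real.exp (-x))⁻¹ := inv_anti₀ hposc h1
  have hs0 : 0 ≤ c + c - 1 := by linarith
  have hs4 : c + c - 1 ≤ 4 / x := by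
    have h1 : 0 < 2 / x := by positivity
    have h2 : 4 / x = 2 * (2 / x) := by ring
    linarith
  have h4x : 4 / x = 4 * d / ε := by
    rw [hxdef]; field_simp
  constructor
  · exact Summable.of_nonneg_of_le (fun m => (Real.exp_pos _).le) hle hpi.summable
  · calc ∑' m : Fin d → ℤ, Real.exp (-ε * ‖latt m‖)
        ≤ ∑' m : Fin d → ℤ, ∏ i, Real.exp (-x * |(m i : ℝ)|) :=
          Summable.tsum_le_tsum hle
            (Summable.of_nonneg_of_le (fun m => (Real.exp_pos _).le) hle hpi.summable)
            hpi.summable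
      _ = (c + c - 1) ^ d := hpi.tsum_eq
      _ ≤ (4 / x) ^ d := pow_le_pow_left₀ hs0 hs4 d
      _ = (4 * d / ε) ^ d := by rw [h4x]

lemma latt_norm_sub_comm {d : ℕ} (a b : Fin d → ℤ) : ‖latt (b - a)‖ = ‖latt (a - b)‖ := by
  have h : latt (b - a) = -latt (a - b) := by
    ext i
    show ((b i - a i : ℤ) : ℝ) = -((a i - b i : ℤ) : ℝ)
    push_cast; ring
  rw [h, norm_neg]

lemma half_bound {d : ℕ} (hd : 1 ≤ d) {γ γ' M N : ℝ}
    (hγ'0 : 0 ≤ γ') (hlt : γ' < γ) (hγ1 : γ ≤ 1) (hM : 0 ≤ M) (hN : 0 ≤ N)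
    (A B : (Fin d → ℤ) → (Fin d → ℤ) → ℂ)
    (hA : ∀ a b, ‖A a b‖ ≤ M * Real.exp (-γ * ‖latt (a - b)‖))
    (hB : ∀ a b, ‖B a b‖ ≤ N * Real.exp (-γ' * ‖latt (a - b)‖))
    (a b : Fin d → ℤ) :
    Summable (fun k => ‖A a k‖ * ‖B k b‖) ∧
    ‖∑' k, A a k * B k b‖ ≤
      (4 * d) ^ d * ((γ - γ') ^ d)⁻¹ * M * N * Real.exp (-γ' * ‖latt (a - b)‖) := by
  have hε0 : 0 < γ - γ' := by linarith
  have hε1 : γ - γ' ≤ 1 := by linarith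
  obtain ⟨hsumF, htsumF⟩ := key_sum hd hε0 hε1
  set F : (Fin d → ℤ) → ℝ := fun m => Real.exp (-(γ - γ') * ‖latt m‖) with hF
  set cst : ℝ := M * N * Real.exp (-γ' * ‖latt (a - b)‖) with hcst
  have hcst0 : 0 ≤ cst := by rw [hcst]; positivity
  -- summability of the shifted majorant
  have hFa : Summable (fun k : Fin d → ℤ => F (a - k)) := by
    have : Summable (F ∘ (Equiv.subLeft a)) := (Equiv.summable_iff _).mpr hsumF
    exact this.congr fun k => rfl
  have hFatsum : ∑' k : Fin d → ℤ, F (a - k) = ∑' m, F m := by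
    exact Equiv.tsum_eq (Equiv.subLeft a) F
  -- pointwise bound
  have h1 : ∀ k, ‖A a k‖ * ‖B k b‖ ≤ cst * F (a - k) := by
    intro k
    have htri := latt_triangle a b k
    have hexp : Real.exp (-γ * ‖latt (a - k)‖) * Real.exp (-γ' * ‖latt (k - b)‖) ≤
        Real.exp (-γ' * ‖latt (a - b)‖) * Real.exp (-(γ - γ') * ‖latt (a - k)‖) := by
      rw [← Real.exp_add, ← Real.exp_add]
      apply Real.exp_le_exp.mpr
      nlinarith [mul_le_mul_of_nonneg_left htri hγ'0]
    calc ‖A a k‖ * ‖B k b‖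
        ≤ (M * Real.exp (-γ * ‖latt (a - k)‖)) * (N * Real.exp (-γ' * ‖latt (k - b)‖)) :=
          mul_le_mul (hA a k) (hB k b) (norm_nonneg _) (by positivity)
      _ = (M * N) * (Real.exp (-γ * ‖latt (a - k)‖) * Real.exp (-γ' * ‖latt (k - b)‖)) := by
          ring
      _ ≤ (M * N) * (Real.exp (-γ' * ‖latt (a - b)‖) * Real.exp (-(γ - γ') * ‖latt (a - k)‖)) :=
          mul_le_mul_of_nonneg_left hexp (by positivity)
      _ = cst * F (a - k) := by rw [hcst, hF]; ring
  have hsum1 : Summable (fun k => ‖A a k‖ * ‖B k b‖) :=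
    Summable.of_nonneg_of_le (fun k => mul_nonneg (norm_nonneg _) (norm_nonneg _)) h1
      (hFa.mul_left cst)
  refine ⟨hsum1, ?_⟩
  have hsumnorm : Summable (fun k => ‖A a k * B k b‖) :=
    hsum1.congr fun k => (norm_mul _ _).symm
  calc ‖∑' k, A a k * B k b‖
      ≤ ∑' k, ‖A a k * B k b‖ := norm_tsum_le_tsum_norm hsumnorm
    _ = ∑' k, ‖A a k‖ * ‖B k b‖ := tsum_congr fun k => norm_mul _ _
    _ ≤ ∑' k, cst * F (a - k) := Summable.tsum_le_tsum h1 hsum1 (hFa.mul_left cst)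
    _ = cst * ∑' k, F (a - k) := tsum_mul_left
    _ = cst * ∑' m, F m := by rw [hFatsum]
    _ ≤ cst * ((4 * d / (γ - γ')) ^ d) := mul_le_mul_of_nonneg_left htsumF hcst0
    _ = (4 * d) ^ d * ((γ - γ') ^ d)⁻¹ * M * N * Real.exp (-γ' * ‖latt (a - b)‖) := by
        rw [hcst, div_pow, div_eq_mul_inv]; ring

/-- Multiplication estimate (2.4): if `|A(a,b)| ≤ M e^{−γ|a−b|}` and
`|B(a,b)| ≤ N e^{−γ'|a−b|}` with `0 ≤ γ' < γ ≤ 1`, then the matrix products `AB`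
and `BA` are absolutely convergent and satisfy
`|(AB)(a,b)|, |(BA)(a,b)| ≤ C (γ−γ')^{−d} M N e^{−γ'|a−b|}`,
with `C` depending only on `d`. -/
theorem stmt_16 (d : ℕ) (hd : 1 ≤ d) :
    ∃ C : ℝ, 0 < C ∧ ∀ γ γ' : ℝ, 0 ≤ γ' → γ' < γ → γ ≤ 1 →
      ∀ M N : ℝ, 0 ≤ M → 0 ≤ N →
      ∀ A B : (Fin d → ℤ) → (Fin d → ℤ) → ℂ,
        (∀ a b, ‖A a b‖ ≤ M * Real.exp (-γ * ‖latt (a - b)‖)) →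
        (∀ a b, ‖B a b‖ ≤ N * Real.exp (-γ' * ‖latt (a - b)‖)) →
        ∀ a b : Fin d → ℤ,
          Summable (fun k => ‖A a k‖ * ‖B k b‖) ∧
          Summable (fun k => ‖B a k‖ * ‖A k b‖) ∧
          ‖∑' k, A a k * B k b‖ ≤
            C * (γ - γ') ^ (-(d : ℝ)) * M * N * Real.exp (-γ' * ‖latt (a - b)‖) ∧
          ‖∑' k, B a k * A k b‖ ≤
            C * (γ - γ') ^ (-(d : ℝ)) * M * N * Real.exp (-γ' * ‖latt (a - b)‖) := by
  refine ⟨(4 * d) ^ d, ?_, ?_⟩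
  · have : (0:ℝ) < 4 * d := by
      have : (1:ℝ) ≤ d := by exact_mod_cast hd
      linarith
    positivity
  intro γ γ' hγ'0 hlt hγ1 M N hM hN A B hA hB a b
  have hε0 : 0 < γ - γ' := by linarith
  have hrpow : (γ - γ') ^ (-(d : ℝ)) = ((γ - γ') ^ d)⁻¹ := by
    rw [Real.rpow_neg hε0.le, Real.rpow_natCast]
  obtain ⟨hs1, hb1⟩ := half_bound hd hγ'0 hlt hγ1 hM hN A B hA hB a b
  -- transposed matrices for the BA product
  set A' : (Fin d → ℤ) → (Fin d → ℤ) → ℂ := fun x y => A y x with hA'def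
  set B' : (Fin d → ℤ) → (Fin d → ℤ) → ℂ := fun x y => B y x with hB'def
  have hA' : ∀ x y, ‖A' x y‖ ≤ M * Real.exp (-γ * ‖latt (x - y)‖) := by
    intro x y
    rw [hA'def]
    calc ‖A y x‖ ≤ M * Real.exp (-γ * ‖latt (y - x)‖) := hA y x
      _ = M * Real.exp (-γ * ‖latt (x - y)‖) := by rw [latt_norm_sub_comm]
  have hB' : ∀ x y, ‖B' x y‖ ≤ N * Real.exp (-γ' * ‖latt (x - y)‖) := by
    intro x y
    rw [hB'def]
    calc ‖B y x‖ ≤ N * Real.exp (-γ' * ‖latt (y - x)‖) := hB y x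
      _ = N * Real.exp (-γ' * ‖latt (x - y)‖) := by rw [latt_norm_sub_comm]
  obtain ⟨hs2, hb2⟩ := half_bound hd hγ'0 hlt hγ1 hM hN A' B' hA' hB' b a
  refine ⟨hs1, ?_, ?_, ?_⟩
  · exact hs2.congr fun k => by rw [hA'def, hB'def]; exact mul_comm _ _
  · rw [hrpow]; exact hb1
  · rw [hrpow]
    have heq : (∑' k, B a k * A k b) = ∑' k, A' b k * B' k a :=
      tsum_congr fun k => mul_comm _ _
    rw [heq]
    calc ‖∑' k, A' b k * B' k a‖
        ≤ (4 * d) ^ d * ((γ - γ') ^ d)⁻¹ * M * N * Real.exp (-γ' * ‖latt (b - a)‖) := hb2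
      _ = (4 * d) ^ d * ((γ - γ') ^ d)⁻¹ * M * N * Real.exp (-γ' * ‖latt (a - b)‖) := by
          rw [latt_norm_sub_comm]
end

section
/- Let n ≥ 1 be an integer. There exists a constant C > 0, depending only on n, with the following property: if f : ℝ → ℝ is n times continuously differentiable on the interval I = (−1, 1) and satisfies |f^{(n)}(t)| ≥ 1 for all t ∈ I, then for every ε > 0 the Lebesgue measure of the set {t ∈ I : |f(t)| < ε} is at most C ε^{1/n}. -/
open Set MeasureTheory

-- volume from pairwise distance bound
lemma vol_le_of_dist' {S : Set ℝ} {M : ℝ} (hM : 0 ≤ M)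
    (h : ∀ s ∈ S, ∀ t ∈ S, dist s t ≤ M) :
    volume S ≤ ENNReal.ofReal M := by
  refine (Real.volume_le_diam S).trans ?_
  refine EMetric.diam_le fun s hs t ht => ?_
  rw [edist_dist]
  exact ENNReal.ofReal_le_ofReal (h s hs t ht)

-- MVT gap lemma
lemma gap_lemma {a b : ℝ} {g g' : ℝ → ℝ}
    (hd : ∀ t ∈ Ioo a b, HasDerivAt g (g' t) t)
    (h1 : ∀ t ∈ Ioo a b, 1 ≤ g' t)
    {s t : ℝ} (hs : s ∈ Ioo a b) (ht : t ∈ Ioo a b) (hst : s < t) :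
    t - s ≤ g t - g s := by
  have hsub : Icc s t ⊆ Ioo a b := fun x hx => ⟨lt_of_lt_of_le hs.1 hx.1, lt_of_le_of_lt hx.2 ht.2⟩
  obtain ⟨c, hc, hceq⟩ := exists_hasDerivAt_eq_slope g g' hst
    (fun x hx => (hd x (hsub hx)).continuousAt.continuousWithinAt)
    (fun x hx => hd x (hsub (Ioo_subset_Icc_self hx)))
  have h1c := h1 c (hsub (Ioo_subset_Icc_self hc))
  rw [hceq, le_div_iff₀ (by linarith [hst])] at h1c
  linarith

lemma aux_sublevel : ∀ k : ℕ, 1 ≤ k → ∀ (a b : ℝ) (f : ℝ → ℝ) (g : ℕ → ℝ → ℝ),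
    g 0 = f →
    (∀ i < k, ∀ t ∈ Ioo a b, HasDerivAt (g i) (g (i+1) t) t) →
    (∀ t ∈ Ioo a b, 1 ≤ g k t) →
    ∀ ε : ℝ, 0 < ε →
      volume {t | t ∈ Ioo a b ∧ |f t| < ε} ≤
        ENNReal.ofReal ((2 ^ (k+1) - 2) * ε ^ ((k : ℝ)⁻¹)) := by
  intro k hk
  induction k, hk using Nat.le_induction with
  | base =>
    intro a b f g hg0 hchain hlow ε hε
    have hbound : volume {t | t ∈ Ioo a b ∧ |f t| < ε} ≤ ENNReal.ofReal (2 * ε) := by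
      apply vol_le_of_dist' (by linarith)
      rintro s ⟨hs, hfs⟩ t ⟨ht, hft⟩
      have key : ∀ s t : ℝ, s ∈ Ioo a b → t ∈ Ioo a b → s < t →
          |f s| < ε → |f t| < ε → dist s t ≤ 2 * ε := by
        intro s t hs ht hst hfs hft
        have := gap_lemma (hchain 0 one_pos) hlow hs ht hst
        rw [hg0] at this
        rw [Real.dist_eq, abs_sub_comm, abs_of_pos (by linarith)]
        cases' abs_lt.mp hfs with h1 h2
        cases' abs_lt.mp hft with h3 h4
        linarith
      rcases lt_trichotomy s t with h | h | h
      · exact key s t hs ht h hfs hft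
      · simp [h]; positivity
      · rw [dist_comm]; exact key t s ht hs h hft hfs
    refine hbound.trans (ENNReal.ofReal_le_ofReal ?_)
    norm_num [Real.rpow_one]
  | succ k hk IH =>
    intro a b f g hg0 hchain hlow ε hε
    have hkR : (0:ℝ) < k := by exact_mod_cast hk
    set δ : ℝ := ε ^ (((k:ℝ)+1)⁻¹) with hδdef
    have hδ : 0 < δ := Real.rpow_pos_of_pos hε _
    set ε' : ℝ := ε / δ with hε'def
    have hε' : 0 < ε' := div_pos hε hδ
    have hCk : (0:ℝ) ≤ 2 ^ (k+1) - 2 := by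
      have : (2:ℝ)^1 ≤ 2^(k+1) := pow_le_pow_right₀ one_le_two (by omega)
      simpa using this
    have key : ε' ^ ((k:ℝ)⁻¹) = δ := by
      rw [hε'def, hδdef]
      rw [show ε / ε ^ (((k:ℝ)+1)⁻¹) = ε ^ ((1:ℝ) - ((k:ℝ)+1)⁻¹) by
        rw [Real.rpow_sub hε, Real.rpow_one]]
      rw [← Real.rpow_mul hε.le]
      congr 1
      have hk0 : (k:ℝ) ≠ 0 := ne_of_gt hkR
      have hk1 : (k:ℝ) + 1 ≠ 0 := by positivity
      field_simp
      ring
    -- the sets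
    set E := {t | t ∈ Ioo a b ∧ |f t| < ε} with hE
    set Jp := {t | t ∈ Ioo a b ∧ δ < g k t} with hJp
    set Jm := {t | t ∈ Ioo a b ∧ g k t < -δ} with hJm
    set J0 := {t | t ∈ Ioo a b ∧ |g k t| ≤ δ} with hJ0
    have hcover : E ⊆ (E ∩ Jm) ∪ (J0 ∪ (E ∩ Jp)) := by
      rintro t ⟨ht, hft⟩
      rcases le_or_gt (g k t) (-δ) with h | h
      · rcases lt_or_eq_of_le h with h' | h'
        · exact Or.inl ⟨⟨ht, hft⟩, ht, h'⟩
        · exact Or.inr (Or.inl ⟨ht, by rw [h']; rw [abs_neg, abs_of_pos hδ]⟩)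
      rcases le_or_gt (g k t) δ with h2 | h2
      · exact Or.inr (Or.inl ⟨ht, abs_le.mpr ⟨h.le, h2⟩⟩)
      · exact Or.inr (Or.inr ⟨⟨ht, hft⟩, ht, h2⟩)
    -- derivative chain facts for the top derivative
    have hdtop : ∀ t ∈ Ioo a b, HasDerivAt (g k) (g (k+1) t) t :=
      fun t ht => hchain k (by omega) t ht
    -- J0 bound
    have hJ0bound : volume J0 ≤ ENNReal.ofReal (2 * δ) := by
      apply vol_le_of_dist' (by linarith)
      have key2 : ∀ s t : ℝ, s ∈ J0 → t ∈ J0 → s < t → dist s t ≤ 2 * δ := by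
        rintro s t ⟨hs, hgs⟩ ⟨ht, hgt⟩ hst
        have := gap_lemma hdtop hlow hs ht hst
        rw [Real.dist_eq, abs_sub_comm, abs_of_pos (by linarith)]
        cases' abs_le.mp hgs with h1 h2
        cases' abs_le.mp hgt with h3 h4
        linarith
      intro s hs t ht
      rcases lt_trichotomy s t with h | h | h
      · exact key2 s t hs ht h
      · simp [h]; positivity
      · rw [dist_comm]; exact key2 t s ht hs h
    -- Jp bound
    have hJpBound : volume (E ∩ Jp) ≤ ENNReal.ofReal ((2 ^ (k+1) - 2) * δ) := by
      rcases Set.eq_empty_or_nonempty Jp with hne | hne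
      · rw [hne, Set.inter_empty, measure_empty]
        positivity
      · set c := sInf Jp with hc
        have hbdd : BddBelow Jp := ⟨a, fun x hx => hx.1.1.le⟩
        have hac : a ≤ c := le_csInf hne fun x hx => hx.1.1.le
        have hgt : ∀ t ∈ Ioo c b, t ∈ Ioo a b ∧ δ < g k t := by
          intro t ht
          obtain ⟨t0, ht0, hlt⟩ := (csInf_lt_iff hbdd hne).mp ht.1
          have hta : t ∈ Ioo a b := ⟨lt_trans ht0.1.1 hlt, ht.2⟩
          refine ⟨hta, lt_of_lt_of_le ht0.2 ?_⟩
          have := gap_lemma hdtop hlow ht0.1 hta hlt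
          linarith
        have hcb : c < b := by
          obtain ⟨t0, ht0⟩ := hne
          exact lt_of_le_of_lt (csInf_le hbdd ht0) ht0.1.2
        have hIH := IH c b (fun t => f t / δ) (fun i t => g i t / δ)
          (by funext t; rw [← hg0]) 
          (fun i hi t ht => ((hchain i (by omega) t (hgt t ht).1).div_const δ))
          (fun t ht => (one_le_div hδ).mpr (hgt t ht).2.le)
          ε' hε'
        rw [key] at hIH
        refine le_trans (measure_mono
            (?_ : E ∩ Jp ⊆ {t | t ∈ Ioo c b ∧ |(fun t => f t / δ) t| < ε'} ∪ {c}))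
          (le_trans (measure_union_le _ {c}) ?_)
        · rintro t ⟨⟨ht, hft⟩, _, hgt'⟩
          rcases eq_or_lt_of_le (csInf_le hbdd ⟨ht, hgt'⟩) with h | h
          · exact Or.inr (mem_singleton_iff.mpr h.symm)
          · refine Or.inl ⟨⟨h, ht.2⟩, ?_⟩
            rw [hε'def, abs_div, abs_of_pos hδ]
            gcongr
        · rw [Real.volume_singleton, add_zero]
          exact hIH
    -- Jm bound
    have hJmBound : volume (E ∩ Jm) ≤ ENNReal.ofReal ((2 ^ (k+1) - 2) * δ) := by
      rcases Set.eq_empty_or_nonempty Jm with hne | hne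
      · rw [hne, Set.inter_empty, measure_empty]
        exact zero_le
      · set d := sSup Jm with hd
        have hbdd : BddAbove Jm := ⟨b, fun x hx => hx.1.2.le⟩
        have hgt : ∀ t ∈ Ioo a d, t ∈ Ioo a b ∧ δ < -g k t := by
          intro t ht
          obtain ⟨t0, ht0, hlt⟩ := (lt_csSup_iff hbdd hne).mp ht.2
          have hta : t ∈ Ioo a b := ⟨ht.1, lt_trans hlt ht0.1.2⟩
          refine ⟨hta, ?_⟩
          have := gap_lemma hdtop hlow hta ht0.1 hlt
          have h2 := ht0.2
          linarith
        have hIH := IH a d (fun t => -f t / δ) (fun i t => -g i t / δ)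
          (by funext t; rw [← hg0])
          (fun i hi t ht => ((hchain i (by omega) t (hgt t ht).1).neg).div_const δ)
          (fun t ht => (one_le_div hδ).mpr (hgt t ht).2.le)
          ε' hε'
        rw [key] at hIH
        refine le_trans (measure_mono
            (?_ : E ∩ Jm ⊆ {t | t ∈ Ioo a d ∧ |(fun t => -f t / δ) t| < ε'} ∪ {d}))
          (le_trans (measure_union_le _ {d}) ?_)
        · rintro t ⟨⟨ht, hft⟩, _, hgt'⟩
          rcases eq_or_lt_of_le (le_csSup hbdd ⟨ht, hgt'⟩) with h | h
          · exact Or.inr (mem_singleton_iff.mpr h)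
          · refine Or.inl ⟨⟨ht.1, h⟩, ?_⟩
            show |-f t / δ| < ε'
            rw [hε'def, abs_div, abs_of_pos hδ, abs_neg]
            gcongr
        · rw [Real.volume_singleton, add_zero]
          exact hIH
    -- combine
    calc volume E ≤ volume (E ∩ Jm) + (volume J0 + volume (E ∩ Jp)) := by
          refine le_trans (measure_mono hcover) ?_
          exact le_trans (measure_union_le _ _) (add_le_add le_rfl (measure_union_le _ _))
      _ ≤ ENNReal.ofReal ((2 ^ (k+1) - 2) * δ) +
          (ENNReal.ofReal (2 * δ) + ENNReal.ofReal ((2 ^ (k+1) - 2) * δ)) :=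
          add_le_add hJmBound (add_le_add hJ0bound hJpBound)
      _ ≤ ENNReal.ofReal ((2 ^ (k+1+1) - 2) * ε ^ ((k+1 : ℕ) : ℝ)⁻¹) := by
          rw [← ENNReal.ofReal_add (by positivity) (by positivity),
            ← ENNReal.ofReal_add (by positivity) (by positivity)]
          apply ENNReal.ofReal_le_ofReal
          have hcast : (((k:ℕ)+1:ℕ):ℝ)⁻¹ = ((k:ℝ)+1)⁻¹ := by push_cast; ring
          rw [hcast, ← hδdef]
          apply le_of_eq
          rw [pow_succ]
          ring


lemma itDW_open {f : ℝ → ℝ} {s : Set ℝ} (hs : IsOpen s) {x : ℝ} (hx : x ∈ s) (m : ℕ) :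
    iteratedDerivWithin m f s x = iteratedDeriv m f x := by
  simp only [iteratedDerivWithin, iteratedDeriv, iteratedFDerivWithin_of_isOpen m hs hx]

lemma chain_lemma {n : ℕ} {f : ℝ → ℝ} {s : Set ℝ} (hs : IsOpen s)
    (hf : ContDiffOn ℝ n f s) {i : ℕ} (hi : i < n) {t : ℝ} (ht : t ∈ s) :
    HasDerivAt (iteratedDeriv i f) (iteratedDeriv (i+1) f t) t := by
  have hu : UniqueDiffOn ℝ s := hs.uniqueDiffOn
  have hdiff : DifferentiableOn ℝ (iteratedDerivWithin i f s) s :=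
    hf.differentiableOn_iteratedDerivWithin (by exact_mod_cast hi) hu
  have hev : iteratedDerivWithin i f s =ᶠ[nhds t] iteratedDeriv i f :=
    Filter.eventuallyEq_of_mem (hs.mem_nhds ht) (fun x hx => itDW_open hs hx i)
  have hda : DifferentiableAt ℝ (iteratedDeriv i f) t :=
    ((hdiff t ht).differentiableAt (hs.mem_nhds ht)).congr_of_eventuallyEq hev.symm
  rw [iteratedDeriv_succ]
  exact hda.hasDerivAt

/-- Lemma A1: there is `C > 0` depending only on `n ≥ 1` such that for every
`f : (−1,1) → ℝ` of class `Cⁿ` with `|f⁽ⁿ⁾| ≥ 1` on `(−1,1)` and every `ε > 0`,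
the Lebesgue measure of `{t ∈ (−1,1) : |f(t)| < ε}` is at most `C ε^{1/n}`. -/
theorem stmt_17 (n : ℕ) (hn : 1 ≤ n) :
    ∃ C : ℝ, 0 < C ∧ ∀ f : ℝ → ℝ,
      ContDiffOn ℝ n f (Set.Ioo (-1 : ℝ) 1) →
      (∀ t ∈ Set.Ioo (-1 : ℝ) 1,
        1 ≤ |iteratedDerivWithin n f (Set.Ioo (-1 : ℝ) 1) t|) →
      ∀ ε : ℝ, 0 < ε →
        MeasureTheory.volume {t | t ∈ Set.Ioo (-1 : ℝ) 1 ∧ |f t| < ε} ≤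
          ENNReal.ofReal (C * ε ^ (1 / (n : ℝ))) := by
  refine ⟨2 ^ (n+1) - 2, ?_, ?_⟩
  · have h4 : (4:ℝ) ≤ 2 ^ (n+1) := by
      calc (4:ℝ) = 2 ^ 2 := by norm_num
        _ ≤ 2 ^ (n+1) := pow_le_pow_right₀ one_le_two (by omega)
    linarith
  · intro f hf hsign ε hε
    have hIopen : IsOpen (Set.Ioo (-1:ℝ) 1) := isOpen_Ioo
    set G := iteratedDeriv n f with hG
    have hGabs : ∀ t ∈ Set.Ioo (-1:ℝ) 1, 1 ≤ |G t| := by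
      intro t ht
      have := hsign t ht
      rwa [itDW_open hIopen ht n] at this
    have hGcont : ContinuousOn G (Set.Ioo (-1:ℝ) 1) := by
      have h := hf.continuousOn_iteratedDerivWithin (le_refl _) hIopen.uniqueDiffOn
      exact h.congr fun x hx => (itDW_open hIopen hx n).symm
    have hdich : (∀ t ∈ Set.Ioo (-1:ℝ) 1, 1 ≤ G t) ∨
        (∀ t ∈ Set.Ioo (-1:ℝ) 1, 1 ≤ -G t) := by
      by_cases hpos : ∀ t ∈ Set.Ioo (-1:ℝ) 1, 1 ≤ G t
      · exact Or.inl hpos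
      · push_neg at hpos
        obtain ⟨t0, ht0, hlt⟩ := hpos
        have ht0' : G t0 ≤ -1 := by
          have h1 := hGabs t0 ht0
          rcases le_or_gt 0 (G t0) with h | h
          · rw [abs_of_nonneg h] at h1; linarith
          · rw [abs_of_neg h] at h1; linarith
        refine Or.inr fun t ht => ?_
        by_contra hcon
        push_neg at hcon
        have htpos : 1 ≤ G t := by
          have h1 := hGabs t ht
          rcases le_or_gt 0 (G t) with h | h
          · rwa [abs_of_nonneg h] at h1
          · rw [abs_of_neg h] at h1; linarith
        have hsub : Set.uIcc t0 t ⊆ Set.Ioo (-1:ℝ) 1 :=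
          (Set.ordConnected_Ioo).uIcc_subset ht0 ht
        have h0mem : (0:ℝ) ∈ Set.uIcc (G t0) (G t) :=
          Set.mem_uIcc.mpr (Or.inl ⟨by linarith, by linarith⟩)
        obtain ⟨s, hsmem, hs0⟩ := intermediate_value_uIcc (hGcont.mono hsub) h0mem
        have := hGabs s (hsub hsmem)
        rw [hs0] at this
        norm_num at this
    rw [one_div]
    rcases hdich with hpos | hneg
    · exact aux_sublevel n hn (-1) 1 f (fun i => iteratedDeriv i f)
        (by funext t; simp)
        (fun i hi t ht => chain_lemma hIopen hf hi ht) hpos ε hε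
    · have h := aux_sublevel n hn (-1) 1 (fun t => -f t) (fun i t => -iteratedDeriv i f t)
        (by funext t; simp)
        (fun i hi t ht => (chain_lemma hIopen hf hi ht).neg)
        hneg ε hε
      have hset : {t | t ∈ Set.Ioo (-1:ℝ) 1 ∧ |f t| < ε}
          = {t | t ∈ Set.Ioo (-1:ℝ) 1 ∧ |(fun t => -f t) t| < ε} := by
        ext t; simp [abs_neg]
      rw [hset]
      exact h
end

section
/- There exists a constant C > 0 (independent of N) with the following property: fix an integer N ≥ 1; let A(t), t ∈ (−1,1), be the real diagonal N×N matrix with diagonal entries a_1(t), …, a_N(t), where each a_j : (−1,1) → ℝ is C¹ with a_j'(t) ≥ 1 for all t, and let B(t), t ∈ (−1,1), be a Hermitian complex N×N matrix depending C¹ on t with operator norm ‖B'(t)‖ ≤ 1/2 for all t. Then for every ε > 0 the Lebesgue measure of the set {t ∈ (−1,1) : some eigenvalue λ of A(t) + B(t) satisfies |λ| < ε} is at most C N ε. -/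
open Matrix Set

namespace StmtAux

variable {N : ℕ}

noncomputable abbrev qf (M : Matrix (Fin N) (Fin N) ℂ) (v : EuclideanSpace ℂ (Fin N)) : ℝ :=
  RCLike.re (inner (𝕜 := ℂ) v (Matrix.toEuclideanLin M v))

lemma eigvec_apply (M : Matrix (Fin N) (Fin N) ℂ) (hM : M.IsHermitian) (j : Fin N) :
    Matrix.toEuclideanLin M (hM.eigenvectorBasis j) =
      (hM.eigenvalues j : ℂ) • hM.eigenvectorBasis j := by
  have h := hM.mulVec_eigenvectorBasis j
  apply (WithLp.equiv 2 _).injective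
  ext i
  simpa [Matrix.toEuclideanLin_apply] using congrFun h i

lemma repr_toEuclideanLin (M : Matrix (Fin N) (Fin N) ℂ) (hM : M.IsHermitian)
    (v : EuclideanSpace ℂ (Fin N)) (j : Fin N) :
    hM.eigenvectorBasis.repr (Matrix.toEuclideanLin M v) j
      = (hM.eigenvalues j : ℂ) * hM.eigenvectorBasis.repr v j := by
  have hsym := (Matrix.isHermitian_iff_isSymmetric.1 hM)
  rw [OrthonormalBasis.repr_apply_apply, OrthonormalBasis.repr_apply_apply,
    ← hsym (hM.eigenvectorBasis j) v, eigvec_apply M hM j, inner_smul_left]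
  simp

lemma qf_eq (M : Matrix (Fin N) (Fin N) ℂ) (hM : M.IsHermitian) (v : EuclideanSpace ℂ (Fin N)) :
    qf M v = ∑ j, hM.eigenvalues j * ‖hM.eigenvectorBasis.repr v j‖ ^ 2 := by
  have h1 : inner (𝕜 := ℂ) v (Matrix.toEuclideanLin M v)
      = inner (𝕜 := ℂ) (hM.eigenvectorBasis.repr v)
          (hM.eigenvectorBasis.repr (Matrix.toEuclideanLin M v)) := by
    rw [LinearIsometryEquiv.inner_map_map]
  rw [qf, h1, PiLp.inner_apply]
  rw [map_sum]
  congr 1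
  ext j
  rw [repr_toEuclideanLin M hM]
  simp only [RCLike.inner_apply]
  set c := hM.eigenvectorBasis.repr v j
  have : (starRingEnd ℂ) c * ((hM.eigenvalues j : ℂ) * c) = (hM.eigenvalues j : ℂ) * (‖c‖^2 : ℝ) := by
    rw [mul_comm ((starRingEnd ℂ) c), mul_assoc, Complex.mul_conj']
    norm_cast
  rw [mul_comm, this]
  norm_cast

lemma norm_sq_eq (v : EuclideanSpace ℂ (Fin N)) (b : OrthonormalBasis (Fin N) ℂ (EuclideanSpace ℂ (Fin N))) :
    ‖v‖ ^ 2 = ∑ j, ‖b.repr v j‖ ^ 2 := by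
  rw [← b.repr.norm_map v, EuclideanSpace.norm_eq]
  rw [Real.sq_sqrt (by positivity)]

lemma norm_sq_coord (v : EuclideanSpace ℂ (Fin N)) : ‖v‖ ^ 2 = ∑ j, ‖v j‖ ^ 2 := by
  rw [EuclideanSpace.norm_eq, Real.sq_sqrt (by positivity)]

noncomputable def ecount (M : Matrix (Fin N) (Fin N) ℂ) (hM : M.IsHermitian) (x : ℝ) : ℕ :=
  (Finset.univ.filter (fun j => x ≤ hM.eigenvalues j)).card

lemma ecount_le (M : Matrix (Fin N) (Fin N) ℂ) (hM : M.IsHermitian) (x : ℝ) :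
    ecount M hM x ≤ N := by
  simpa [ecount] using Finset.card_le_card (Finset.filter_subset _ (Finset.univ : Finset (Fin N)))

lemma ecount_mono (M : Matrix (Fin N) (Fin N) ℂ) (hM : M.IsHermitian) {x y : ℝ} (h : x ≤ y) :
    ecount M hM y ≤ ecount M hM x := by
  apply Finset.card_le_card
  intro j hj
  simp only [Finset.mem_filter, Finset.mem_univ, true_and] at *
  linarith

lemma ecount_weyl (M M' : Matrix (Fin N) (Fin N) ℂ) (hM : M.IsHermitian) (hM' : M'.IsHermitian)
    (c x : ℝ) (h : ∀ v : EuclideanSpace ℂ (Fin N), qf M v + c * ‖v‖ ^ 2 ≤ qf M' v) :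
    ecount M hM x ≤ ecount M' hM' (x + c) := by
  by_contra hcon
  push_neg at hcon
  set b := hM.eigenvectorBasis
  set b' := hM'.eigenvectorBasis
  set S₁ := Finset.univ.filter (fun j => x ≤ hM.eigenvalues j) with hS₁
  set S₂ := Finset.univ.filter (fun j => x + c ≤ hM'.eigenvalues j) with hS₂
  let φ : (↥S₁ → ℂ) →ₗ[ℂ] EuclideanSpace ℂ (Fin N) :=
  { toFun := fun d => ∑ i : ↥S₁, d i • b i.val,
    map_add' := by intros f g; simp [add_smul, Finset.sum_add_distrib],
    map_smul' := by intros m f; simp [Finset.smul_sum, smul_smul] }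
  let ψ : EuclideanSpace ℂ (Fin N) →ₗ[ℂ] (↥S₂ → ℂ) :=
  { toFun := fun v => fun j => b'.repr v j.val,
    map_add' := by intros; ext; simp,
    map_smul' := by intros; ext; simp }
  have hnotinj : ¬ Function.Injective (ψ.comp φ) := by
    intro hinj
    have := LinearMap.finrank_le_finrank_of_injective hinj
    simp only [Module.finrank_fintype_fun_eq_card, Fintype.card_coe] at this
    exact absurd this (by simpa [ecount, hS₁, hS₂] using Nat.not_le.mpr hcon)
  obtain ⟨d, hd0, hdker⟩ : ∃ d, d ≠ 0 ∧ (ψ.comp φ) d = 0 := by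
    rw [← LinearMap.ker_eq_bot] at hnotinj
    obtain ⟨d, hd, hd0⟩ := Submodule.exists_mem_ne_zero_of_ne_bot hnotinj
    exact ⟨d, hd0, hd⟩
  set v : EuclideanSpace ℂ (Fin N) := φ d with hv
  have hrepr : ∀ i : Fin N, b.repr v i = if hi : i ∈ S₁ then d ⟨i, hi⟩ else 0 := by
    intro i
    have hv2 : v = ∑ i : ↥S₁, d i • (b i.val) := rfl
    have : b.repr v = ∑ j : ↥S₁, d j • b.repr (b j.val) := by
      rw [hv2, map_sum]
      simp only [_root_.map_smul]
    rw [this]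
    simp only [OrthonormalBasis.repr_self]
    rw [WithLp.ofLp_sum, Finset.sum_apply]
    by_cases hi : i ∈ S₁
    · rw [dif_pos hi, Finset.sum_eq_single (⟨i, hi⟩ : ↥S₁)]
      · simp [EuclideanSpace.single_apply]
      · intro j _ hji
        have : (j : Fin N) ≠ i := fun hji' => hji (Subtype.ext hji')
        simp [EuclideanSpace.single_apply, Ne.symm this]
      · simp
    · rw [dif_neg hi]
      apply Finset.sum_eq_zero
      intro j _
      have : (j : Fin N) ≠ i := fun hji' => hi (hji' ▸ j.2)
      simp [EuclideanSpace.single_apply, Ne.symm this]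
  have hvne : v ≠ 0 := by
    intro hveq
    apply hd0
    ext i
    have := hrepr i.val
    rw [dif_pos i.2, hveq] at this
    simpa using this.symm
  have hnv : 0 < ‖v‖ ^ 2 := pow_pos (norm_pos_iff.mpr hvne) 2
  have hlow : x * ‖v‖ ^ 2 ≤ qf M v := by
    rw [qf_eq M hM v, norm_sq_eq v b, Finset.mul_sum]
    apply Finset.sum_le_sum
    intro i _
    by_cases hi : i ∈ S₁
    · have : x ≤ hM.eigenvalues i := by simpa [hS₁] using hi
      have h2 : (0:ℝ) ≤ ‖b.repr v i‖ ^ 2 := by positivity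
      exact mul_le_mul_of_nonneg_right this h2
    · rw [hrepr i, dif_neg hi]
      simp
  have hker : ∀ j : Fin N, j ∈ S₂ → b'.repr v j = 0 := by
    intro j hj
    have := congrFun hdker ⟨j, hj⟩
    exact this
  have hup : qf M' v < (x + c) * ‖v‖ ^ 2 := by
    rw [qf_eq M' hM' v, norm_sq_eq v b', Finset.mul_sum]
    apply Finset.sum_lt_sum
    · intro j _
      by_cases hj : j ∈ S₂
      · rw [hker j hj]; simp
      · have : hM'.eigenvalues j < x + c := by
          by_contra hcc
          exact hj (by simp [hS₂]; linarith [not_lt.mp hcc])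
        exact mul_le_mul_of_nonneg_right this.le (by positivity)
    · have : ∃ j : Fin N, b'.repr v j ≠ 0 := by
        by_contra hall
        push_neg at hall
        apply hvne
        apply b'.repr.injective
        ext j
        simpa using hall j
      obtain ⟨j, hj⟩ := this
      refine ⟨j, Finset.mem_univ j, ?_⟩
      have hjS : j ∉ S₂ := fun hjs => hj (hker j hjs)
      have hlt : hM'.eigenvalues j < x + c := by
        by_contra hcc
        exact hjS (by simp [hS₂]; linarith [not_lt.mp hcc])
      have : (0:ℝ) < ‖b'.repr v j‖ ^ 2 := pow_pos (norm_pos_iff.mpr hj) 2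
      exact mul_lt_mul_of_pos_right hlt this
  have := h v
  nlinarith

lemma qf_add (M₁ M₂ : Matrix (Fin N) (Fin N) ℂ) (v : EuclideanSpace ℂ (Fin N)) :
    qf (M₁ + M₂) v = qf M₁ v + qf M₂ v := by
  simp [qf, inner_add_right]

lemma qf_diagonal (r : Fin N → ℝ) (v : EuclideanSpace ℂ (Fin N)) :
    qf (Matrix.diagonal (fun j => (r j : ℂ))) v = ∑ j, r j * ‖v j‖ ^ 2 := by
  rw [qf, PiLp.inner_apply, map_sum]
  congr 1
  ext j
  have : (Matrix.toEuclideanLin (Matrix.diagonal (fun j => (r j : ℂ))) v) j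
      = (r j : ℂ) * v j := by
    simp [Matrix.toEuclideanLin_apply, Matrix.mulVec_diagonal]
  rw [this]
  simp only [RCLike.inner_apply]
  have : (starRingEnd ℂ) (v j) * ((r j : ℂ) * v j) = (r j : ℂ) * (‖v j‖^2 : ℝ) := by
    rw [mul_comm ((starRingEnd ℂ) (v j)), mul_assoc, Complex.mul_conj']
    norm_cast
  rw [mul_comm, this]
  norm_cast

lemma isHermitian_diag_add (r : Fin N → ℝ) (Bm : Matrix (Fin N) (Fin N) ℂ) (hB : Bm.IsHermitian) :
    (Matrix.diagonal (fun j => (r j : ℂ)) + Bm).IsHermitian := by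
  apply Matrix.IsHermitian.add _ hB
  have hst : (star fun j => ((r j : ℂ))) = fun j => ((r j : ℂ)) := by
    funext j
    show star ((r j : ℂ)) = (r j : ℂ)
    rw [Complex.star_def, Complex.conj_ofReal]
  rw [Matrix.IsHermitian, Matrix.diagonal_conjTranspose, hst]

lemma hermitian_spectrum_subset (M : Matrix (Fin N) (Fin N) ℂ) (hM : M.IsHermitian)
    {μ : ℂ} (hμ : μ ∈ spectrum ℂ M) : ∃ j, μ = (hM.eigenvalues j : ℂ) := by
  conv at hμ => rw [hM.spectral_theorem, Unitary.conjStarAlgAut_apply, Unitary.spectrum_star_right_conjugate, spectrum_diagonal]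
  obtain ⟨j, hj⟩ := hμ
  exact ⟨j, hj.symm⟩

lemma scalar_incr (f : ℝ → ℝ) (hf : ContDiffOn ℝ 1 f (Set.Ioo (-1:ℝ) 1))
    (hd : ∀ t ∈ Set.Ioo (-1:ℝ) 1, 1 ≤ deriv f t)
    {t s : ℝ} (ht : t ∈ Set.Ioo (-1:ℝ) 1) (hs : s ∈ Set.Ioo (-1:ℝ) 1) (hts : t ≤ s) :
    s - t ≤ f s - f t := by
  have hdiff : ∀ x ∈ Set.Ioo (-1:ℝ) 1, DifferentiableAt ℝ f x := fun x hx =>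
    (hf.contDiffAt ((isOpen_Ioo).mem_nhds hx)).differentiableAt (by norm_num)
  set g : ℝ → ℝ := fun x => f x - x with hg
  have hmono : MonotoneOn g (Set.Ioo (-1:ℝ) 1) := by
    apply monotoneOn_of_deriv_nonneg (convex_Ioo _ _)
    · exact fun x hx => ((hdiff x hx).sub (differentiableAt_fun_id)).continuousAt.continuousWithinAt
    · intro x hx
      rw [interior_Ioo] at hx
      exact ((hdiff x hx).sub differentiableAt_fun_id).differentiableWithinAt
    · intro x hx
      rw [interior_Ioo] at hx
      have hder : deriv g x = deriv f x - 1 := by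
        rw [hg, deriv_fun_sub (hdiff x hx) differentiableAt_fun_id]
        simp
      rw [hder]
      linarith [hd x hx]
  have := hmono ht hs hts
  simp only [hg] at this
  linarith

lemma toCLM_sum (A : Matrix (Fin N) (Fin N) ℂ) :
    Matrix.toEuclideanCLM (𝕜 := ℂ) A
      = ∑ p : Fin N × Fin N, A p.1 p.2 • Matrix.toEuclideanCLM (𝕜 := ℂ)
          (Matrix.single p.1 p.2 1) := by
  conv_lhs => rw [Matrix.matrix_eq_sum_single A]
  simp only [map_sum]
  rw [← Finset.sum_product']
  apply Finset.sum_congr rfl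
  intro p _
  rw [← _root_.map_smul, Matrix.smul_single, smul_eq_mul, mul_one]

lemma hasDerivAt_toCLM (B B' : ℝ → Matrix (Fin N) (Fin N) ℂ) (t : ℝ)
    (hd : ∀ i j, HasDerivAt (fun s => B s i j) (B' t i j) t) :
    HasDerivAt (fun s => Matrix.toEuclideanCLM (𝕜 := ℂ) (B s))
      (Matrix.toEuclideanCLM (𝕜 := ℂ) (B' t)) t := by
  have h1 : (fun s => Matrix.toEuclideanCLM (𝕜 := ℂ) (B s))
      = fun s => ∑ p : Fin N × Fin N, B s p.1 p.2 • Matrix.toEuclideanCLM (𝕜 := ℂ)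
          (Matrix.single p.1 p.2 1) := funext fun s => toCLM_sum _
  rw [h1, toCLM_sum (B' t)]
  apply HasDerivAt.fun_sum
  intro p _
  exact (hd p.1 p.2).smul_const (Matrix.toEuclideanCLM (𝕜 := ℂ) (Matrix.single p.1 p.2 1))

lemma op_lipschitz (B B' : ℝ → Matrix (Fin N) (Fin N) ℂ)
    (hDer : ∀ t ∈ Set.Ioo (-1:ℝ) 1, HasDerivAt (fun s => Matrix.toEuclideanCLM (𝕜 := ℂ) (B s))
      (Matrix.toEuclideanCLM (𝕜 := ℂ) (B' t)) t)
    (hB' : ∀ t ∈ Set.Ioo (-1:ℝ) 1, ‖Matrix.toEuclideanCLM (𝕜 := ℂ) (B' t)‖ ≤ 1 / 2)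
    {t s : ℝ} (ht : t ∈ Set.Ioo (-1:ℝ) 1) (hs : s ∈ Set.Ioo (-1:ℝ) 1) (hts : t ≤ s) :
    ‖Matrix.toEuclideanCLM (𝕜 := ℂ) (B s) - Matrix.toEuclideanCLM (𝕜 := ℂ) (B t)‖
      ≤ (1/2) * (s - t) := by
  have hsub : Set.Icc t s ⊆ Set.Ioo (-1:ℝ) 1 := fun x hx =>
    ⟨lt_of_lt_of_le ht.1 hx.1, lt_of_le_of_lt hx.2 hs.2⟩
  have := Convex.norm_image_sub_le_of_norm_hasDerivWithin_le
    (f := fun s => Matrix.toEuclideanCLM (𝕜 := ℂ) (B s))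
    (f' := fun t => Matrix.toEuclideanCLM (𝕜 := ℂ) (B' t))
    (C := 1/2) (s := Set.Icc t s)
    (fun x hx => (hDer x (hsub hx)).hasDerivWithinAt)
    (fun x hx => hB' x (hsub hx)) (convex_Icc _ _)
    (Set.left_mem_Icc.mpr hts) (Set.right_mem_Icc.mpr hts)
  calc ‖Matrix.toEuclideanCLM (𝕜 := ℂ) (B s) - Matrix.toEuclideanCLM (𝕜 := ℂ) (B t)‖
      ≤ 1/2 * ‖s - t‖ := this
    _ = 1/2 * (s - t) := by rw [Real.norm_eq_abs, abs_of_nonneg (by linarith)]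

lemma qf_op_bound (T : EuclideanSpace ℂ (Fin N) →L[ℂ] EuclideanSpace ℂ (Fin N))
    (v : EuclideanSpace ℂ (Fin N)) :
    |RCLike.re (inner (𝕜 := ℂ) v (T v))| ≤ ‖T‖ * ‖v‖ ^ 2 := by
  calc |RCLike.re (inner (𝕜 := ℂ) v (T v))| ≤ ‖(inner (𝕜 := ℂ) v (T v) : ℂ)‖ :=
        RCLike.abs_re_le_norm _
    _ ≤ ‖v‖ * ‖T v‖ := norm_inner_le_norm _ _
    _ ≤ ‖v‖ * (‖T‖ * ‖v‖) := by
        have := T.le_opNorm v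
        have h0 : (0:ℝ) ≤ ‖v‖ := norm_nonneg _
        nlinarith [norm_nonneg (T v)]
    _ = ‖T‖ * ‖v‖ ^ 2 := by ring

lemma qf_clm (M : Matrix (Fin N) (Fin N) ℂ) (v : EuclideanSpace ℂ (Fin N)) :
    qf M v = RCLike.re (inner (𝕜 := ℂ) v (Matrix.toEuclideanCLM (𝕜 := ℂ) M v)) := by
  have : Matrix.toEuclideanCLM (𝕜 := ℂ) M v = Matrix.toEuclideanLin M v := by
    have := Matrix.coe_toEuclideanCLM_eq_toEuclideanLin (𝕜 := ℂ) (A := M)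
    exact congrFun (congrArg DFunLike.coe this) v
  rw [qf, this]

end StmtAux

open StmtAux in
/-- Lemma A2: there is `C > 0` (independent of `N`) such that: if `A(t)` is a real
diagonal `N×N` matrix with `C¹` diagonal entries `a_j(t)` satisfying `a_j'(t) ≥ 1`
on `(−1,1)`, and `B(t)` is a Hermitian `N×N` matrix depending `C¹` on `t` with
`‖B'(t)‖ ≤ 1/2` in operator norm, then for every `ε > 0` the Lebesgue measure of
`{t ∈ (−1,1) : some eigenvalue λ of A(t)+B(t) has |λ| < ε}` is at most `C N ε`. -/
theorem stmt_18 :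
    ∃ C : ℝ, 0 < C ∧ ∀ N : ℕ, 1 ≤ N →
      ∀ a : Fin N → ℝ → ℝ,
        (∀ j, ContDiffOn ℝ 1 (a j) (Set.Ioo (-1 : ℝ) 1)) →
        (∀ j, ∀ t ∈ Set.Ioo (-1 : ℝ) 1, 1 ≤ deriv (a j) t) →
      ∀ B B' : ℝ → Matrix (Fin N) (Fin N) ℂ,
        (∀ t ∈ Set.Ioo (-1 : ℝ) 1, (B t).IsHermitian) →
        (∀ i j, ∀ t ∈ Set.Ioo (-1 : ℝ) 1,
          HasDerivAt (fun s => B s i j) (B' t i j) t) →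
        (∀ i j, ContinuousOn (fun s => B' s i j) (Set.Ioo (-1 : ℝ) 1)) →
        (∀ t ∈ Set.Ioo (-1 : ℝ) 1,
          ‖Matrix.toEuclideanCLM (𝕜 := ℂ) (B' t)‖ ≤ 1 / 2) →
      ∀ ε : ℝ, 0 < ε →
        MeasureTheory.volume {t | t ∈ Set.Ioo (-1 : ℝ) 1 ∧
            ∃ μ : ℂ, μ ∈ spectrum ℂ
              (Matrix.diagonal (fun j => ((a j t : ℝ) : ℂ)) + B t) ∧ ‖μ‖ < ε} ≤
          ENNReal.ofReal (C * N * ε) := by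
  refine ⟨8, by norm_num, ?_⟩
  intro N hN a ha ha' B B' hBh hBd _hB'c hB'n ε hε
  set I : Set ℝ := Set.Ioo (-1:ℝ) 1 with hI
  have hherm : ∀ t ∈ I, (Matrix.diagonal (fun j => ((a j t : ℝ) : ℂ)) + B t).IsHermitian :=
    fun t ht => isHermitian_diag_add _ _ (hBh t ht)
  have hDer : ∀ x ∈ I, HasDerivAt (fun s => Matrix.toEuclideanCLM (𝕜 := ℂ) (B s))
      (Matrix.toEuclideanCLM (𝕜 := ℂ) (B' x)) x :=
    fun x hx => hasDerivAt_toCLM B B' x (fun i j => hBd i j x hx)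
  have hQstep : ∀ t ∈ I, ∀ s ∈ I, t ≤ s → ∀ v : EuclideanSpace ℂ (Fin N),
      qf (Matrix.diagonal (fun j => ((a j t : ℝ) : ℂ)) + B t) v + ((s-t)/2) * ‖v‖^2
        ≤ qf (Matrix.diagonal (fun j => ((a j s : ℝ) : ℂ)) + B s) v := by
    intro t ht s hs hts v
    have hdiag : (s - t) * ‖v‖^2
        ≤ qf (Matrix.diagonal fun j => ((a j s : ℝ):ℂ)) v
          - qf (Matrix.diagonal fun j => ((a j t : ℝ):ℂ)) v := by
      rw [qf_diagonal, qf_diagonal, norm_sq_coord v, Finset.mul_sum, ← Finset.sum_sub_distrib]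
      apply Finset.sum_le_sum
      intro j _
      have h1 := scalar_incr (a j) (ha j) (ha' j) ht hs hts
      have h0 : (0:ℝ) ≤ ‖v j‖^2 := by positivity
      nlinarith
    have hBpart : |qf (B s) v - qf (B t) v| ≤ (1/2)*(s-t)*‖v‖^2 := by
      have h1 : qf (B s) v - qf (B t) v = RCLike.re (inner (𝕜:=ℂ) v
          ((Matrix.toEuclideanCLM (𝕜:=ℂ) (B s) - Matrix.toEuclideanCLM (𝕜:=ℂ) (B t)) v)) := by
        rw [qf_clm, qf_clm, ContinuousLinearMap.sub_apply, inner_sub_right, map_sub]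
      rw [h1]
      calc |RCLike.re (inner (𝕜:=ℂ) v
          ((Matrix.toEuclideanCLM (𝕜:=ℂ) (B s) - Matrix.toEuclideanCLM (𝕜:=ℂ) (B t)) v))|
          ≤ ‖Matrix.toEuclideanCLM (𝕜:=ℂ) (B s) - Matrix.toEuclideanCLM (𝕜:=ℂ) (B t)‖ * ‖v‖^2 :=
            qf_op_bound _ v
        _ ≤ (1/2)*(s-t)*‖v‖^2 := by
            apply mul_le_mul_of_nonneg_right (op_lipschitz B B' hDer hB'n ht hs hts)
            positivity
    have e1 := qf_add (Matrix.diagonal fun j => ((a j t : ℝ):ℂ)) (B t) v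
    have e2 := qf_add (Matrix.diagonal fun j => ((a j s : ℝ):ℂ)) (B s) v
    have habs := (abs_le.mp hBpart).1
    have hring : ((s-t)/2) * ‖v‖^2 = (s-t)*‖v‖^2 - (1/2)*(s-t)*‖v‖^2 := by ring
    rw [e1, e2]
    linarith
  -- the counting function
  set k : ℝ → ℕ := fun t =>
    if h : (Matrix.diagonal (fun j => ((a j t : ℝ) : ℂ)) + B t).IsHermitian
    then ecount _ h ε else 0 with hk
  have hkval : ∀ t (h : (Matrix.diagonal (fun j => ((a j t : ℝ) : ℂ)) + B t).IsHermitian),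
      k t = ecount _ h ε := by
    intro t h
    rw [hk]
    simp only
    rw [dif_pos h]
  have hkmono : ∀ t ∈ I, ∀ s ∈ I, t ≤ s → k t ≤ k s := by
    intro t ht s hs hts
    rw [hkval t (hherm t ht), hkval s (hherm s hs)]
    calc ecount _ (hherm t ht) ε
        ≤ ecount _ (hherm s hs) (ε + (s-t)/2) :=
          ecount_weyl _ _ _ _ ((s-t)/2) ε (fun v => hQstep t ht s hs hts v)
      _ ≤ ecount _ (hherm s hs) ε := ecount_mono _ _ (by linarith)
  have hkle : ∀ t, k t ≤ N := by
    intro t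
    rw [hk]
    simp only
    split
    · exact ecount_le _ _ _
    · exact Nat.zero_le N
  have hkjump : ∀ t ∈ I,
      (∃ μ : ℂ, μ ∈ spectrum ℂ (Matrix.diagonal (fun j => ((a j t : ℝ) : ℂ)) + B t) ∧ ‖μ‖ < ε) →
      t + 4*ε ∈ I → k t + 1 ≤ k (t + 4*ε) := by
    rintro t ht ⟨μ, hμs, hμn⟩ ht4
    have hh := hherm t ht
    obtain ⟨j, hj⟩ := hermitian_spectrum_subset _ hh hμs
    have hjabs : |hh.eigenvalues j| < ε := by
      rw [hj] at hμn
      simpa [Complex.norm_real, Real.norm_eq_abs] using hμn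
    have h1 : ecount _ hh ε + 1 ≤ ecount _ hh (-ε) := by
      have hss : (Finset.univ.filter (fun i => ε ≤ hh.eigenvalues i))
          ⊂ (Finset.univ.filter (fun i => -ε ≤ hh.eigenvalues i)) := by
        constructor
        · intro i hi
          simp only [Finset.mem_filter, Finset.mem_univ, true_and] at *
          linarith
        · intro hsub
          have hjmem : j ∈ Finset.univ.filter (fun i => -ε ≤ hh.eigenvalues i) := by
            simp only [Finset.mem_filter, Finset.mem_univ, true_and]
            have := abs_lt.mp hjabs
            linarith [this.1]
          have hjnotmem : j ∉ Finset.univ.filter (fun i => ε ≤ hh.eigenvalues i) := by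
            simp only [Finset.mem_filter, Finset.mem_univ, true_and]
            have := abs_lt.mp hjabs
            linarith [this.2]
          exact hjnotmem (hsub hjmem)
      exact Nat.succ_le_of_lt (Finset.card_lt_card hss)
    have h2 : ecount _ hh (-ε) ≤ ecount _ (hherm _ ht4) (-ε + (t + 4*ε - t)/2) :=
      ecount_weyl _ _ _ _ _ (-ε) (fun v => hQstep t ht (t + 4*ε) ht4 (by linarith) v)
    have heq : -ε + (t + 4*ε - t)/2 = ε := by ring
    rw [heq] at h2
    rw [hkval t hh, hkval (t + 4*ε) (hherm _ ht4)]
    omega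
  -- sets
  set Sg : Set ℝ := {t | t ∈ I ∧ ∃ μ : ℂ, μ ∈ spectrum ℂ
      (Matrix.diagonal (fun j => ((a j t : ℝ) : ℂ)) + B t) ∧ ‖μ‖ < ε} with hSg
  set Im : ℕ → Set ℝ := fun m => {t | t ∈ Sg ∧ t + 4*ε < 1 ∧ k t = m} with hIm
  have hsub : Sg ⊆ Set.Icc (1 - 4*ε) 1 ∪ ⋃ m ∈ Finset.range N, Im m := by
    intro t ⟨htI, hμ⟩
    by_cases hlt : t + 4*ε < 1
    · right
      have ht4 : t + 4*ε ∈ I := ⟨by linarith [htI.1], hlt⟩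
      have hjump := hkjump t htI hμ ht4
      have hle := hkle (t + 4*ε)
      exact Set.mem_iUnion₂.mpr ⟨k t, Finset.mem_range.mpr (by omega), ⟨⟨htI, hμ⟩, hlt, rfl⟩⟩
    · left
      exact ⟨by linarith [not_lt.mp hlt], htI.2.le⟩
  have hImvol : ∀ m : ℕ, MeasureTheory.volume (Im m) ≤ ENNReal.ofReal (4*ε) := by
    intro m
    by_cases hne : (Im m).Nonempty
    · obtain ⟨t₀, ht₀⟩ := hne
      set J : Set ℝ := {x | x ∈ I ∧ k x ≤ m} with hJ
      have hJne : J.Nonempty := ⟨t₀, ht₀.1.1, le_of_eq ht₀.2.2⟩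
      have hbdd : BddAbove J := ⟨1, fun x hx => (hx.1.2).le⟩
      set u := sSup J with hu
      have hsub2 : Im m ⊆ Set.Icc (u - 4*ε) u := by
        intro t ht
        have htI : t ∈ I := ht.1.1
        have ht4 : t + 4*ε ∈ I := ⟨by linarith [htI.1], ht.2.1⟩
        have hjump := hkjump t htI ht.1.2 ht4
        have hup : t ≤ u := le_csSup hbdd ⟨htI, le_of_eq ht.2.2⟩
        have hlow : u ≤ t + 4*ε := by
          apply csSup_le hJne
          intro x hx
          by_contra hc
          push_neg at hc
          have hmono := hkmono (t + 4*ε) ht4 x hx.1 hc.le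
          have hxm := hx.2
          have hkt := ht.2.2
          omega
        exact ⟨by linarith, hup⟩
      calc MeasureTheory.volume (Im m) ≤ MeasureTheory.volume (Set.Icc (u - 4*ε) u) :=
            MeasureTheory.measure_mono hsub2
        _ = ENNReal.ofReal (u - (u - 4*ε)) := Real.volume_Icc
        _ = ENNReal.ofReal (4*ε) := by norm_num
    · rw [Set.not_nonempty_iff_eq_empty] at hne
      rw [hne]
      simp
  calc MeasureTheory.volume Sg
      ≤ MeasureTheory.volume (Set.Icc (1 - 4*ε) 1 ∪ ⋃ m ∈ Finset.range N, Im m) :=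
        MeasureTheory.measure_mono hsub
    _ ≤ MeasureTheory.volume (Set.Icc (1 - 4*ε) 1)
        + MeasureTheory.volume (⋃ m ∈ Finset.range N, Im m) := MeasureTheory.measure_union_le _ _
    _ ≤ ENNReal.ofReal (4*ε) + ∑ m ∈ Finset.range N, MeasureTheory.volume (Im m) := by
        apply add_le_add
        · rw [Real.volume_Icc]
          apply ENNReal.ofReal_le_ofReal
          linarith
        · exact MeasureTheory.measure_biUnion_finset_le _ _
    _ ≤ ENNReal.ofReal (4*ε) + ∑ m ∈ Finset.range N, ENNReal.ofReal (4*ε) := by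
        apply add_le_add le_rfl
        exact Finset.sum_le_sum (fun m _ => hImvol m)
    _ = ENNReal.ofReal (4*ε) + N * ENNReal.ofReal (4*ε) := by
        rw [Finset.sum_const, Finset.card_range, nsmul_eq_mul]
    _ ≤ ENNReal.ofReal (8 * N * ε) := by
        rw [← ENNReal.ofReal_natCast N, ← ENNReal.ofReal_mul (by positivity),
          ← ENNReal.ofReal_add (by positivity) (by positivity)]
        apply ENNReal.ofReal_le_ofReal
        have hN1 : (1:ℝ) ≤ (N:ℝ) := by exact_mod_cast hN
        nlinarith
end
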